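/- arXiv:2203.03533 — 5 statements merged into one kernel-verified Lean document; each statement's English description precedes it below -/
import Mathlib

section
/- For each d ∈ {3, 5, 6, 7}, the group X₀(17)(Q(√d)) of Q(√d)-rational points of the modular curve X₀(17) contains a point of infinite order. -/
open Polynomial IntermediateField NumberField

/-- The modular curve `X₀(11)`: the elliptic curve `y² + y = x³ - x² - 10x - 20`
(Cremona label 11a1), with coefficients in the field `K`. -/
noncomputable def X0_11 (K : Type*) [Field K] : WeierstrassCurve.Affine K :=
  { a₁ := 0, a₂ := -1, a₃ := 1, a₄ := -10, a₆ := -20 }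

/-- The modular curve `X₀(17)`: the elliptic curve `y² + xy + y = x³ - x² - x - 14`
(Cremona label 17a1), with coefficients in the field `K`. -/
noncomputable def X0_17 (K : Type*) [Field K] : WeierstrassCurve.Affine K :=
  { a₁ := 1, a₂ := -1, a₃ := 1, a₄ := -1, a₆ := -14 }

/-- The modular curve `X₀(19)`: the elliptic curve `y² + y = x³ + x² - 9x - 15`
(Cremona label 19a3), with coefficients in the field `K`. -/
noncomputable def X0_19 (K : Type*) [Field K] : WeierstrassCurve.Affine K :=
  { a₁ := 0, a₂ := 1, a₃ := 1, a₄ := -9, a₆ := -15 }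

/-- Every `K`-point of the Weierstrass curve `W` has both coordinates in the image of `ℚ`,
i.e. `W(K)` coincides with the group of rational points `W(ℚ)`. -/
def PointsRational {K : Type*} [Field K] [CharZero K] (W : WeierstrassCurve.Affine K) : Prop :=
  ∀ x y : K, W.Nonsingular x y → (∃ a : ℚ, (a : K) = x) ∧ ∃ b : ℚ, (b : K) = y

namespace X017aux

/-! ### The 2-adic valuation toolkit -/

noncomputable abbrev V (x : ℚ) : ℤ := padicValRat 2 x

lemma v_neg (a : ℚ) : V (-a) = V a := padicValRat.neg a

lemma v_add {a b : ℚ} (ha : a ≠ 0) (hb : b ≠ 0) (h : V a < V b) :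
    a + b ≠ 0 ∧ V (a + b) = V a := by
  have hne : a + b ≠ 0 := by
    intro h0
    have hb' : b = -a := by linarith [h0]
    rw [hb'] at h
    rw [show V (-a) = V a from padicValRat.neg a] at h
    exact lt_irrefl _ h
  exact ⟨hne, padicValRat.add_eq_of_lt hne ha hb h⟩

lemma v_mul {a b : ℚ} (ha : a ≠ 0) (hb : b ≠ 0) : V (a * b) = V a + V b :=
  padicValRat.mul ha hb

lemma v_div {a b : ℚ} (ha : a ≠ 0) (hb : b ≠ 0) : V (a / b) = V a - V b :=
  padicValRat.div ha hb

lemma v_pow {a : ℚ} (ha : a ≠ 0) (k : ℕ) : V (a ^ k) = k * V a :=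
  padicValRat.pow a

lemma v_two : V 2 = 1 := by
  have := padicValRat.self (p := 2) (by norm_num)
  simpa using this

lemma v_odd_int {a : ℤ} (ha : a % 2 = 1) : V (a : ℚ) = 0 := by
  rw [V, padicValRat.of_int, padicValInt.eq_zero_of_not_dvd (by intro hdvd; omega)]
  simp

lemma v_four : V 4 = 2 := by
  rw [show (4:ℚ) = 2^2 by norm_num, v_pow (by norm_num), v_two]; norm_num

lemma v_m3 : V (-3) = 0 := by
  rw [show (-3:ℚ) = ((-3 : ℤ) : ℚ) by norm_num, v_odd_int (by decide)]

lemma v_m2 : V (-2) = 1 := by rw [show (-2:ℚ) = -(2:ℚ) by norm_num, v_neg, v_two]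

lemma v_m55 : V (-55) = 0 := by
  rw [show (-55:ℚ) = ((-55 : ℤ) : ℚ) by norm_num, v_odd_int (by decide)]

lemma v_m1 : V (-1) = 0 := by
  rw [show (-1:ℚ) = ((-1 : ℤ) : ℚ) by norm_num, v_odd_int (by decide)]

lemma v_six : V 6 = 1 := by
  rw [show (6:ℚ) = 2 * ((3:ℤ):ℚ) by norm_num, v_mul (by norm_num) (by norm_num), v_two,
    v_odd_int (by decide)]; norm_num

lemma v_34 : V (3/4) = -2 := by
  rw [v_div (by norm_num) (by norm_num), v_four,
    show (3:ℚ) = ((3:ℤ):ℚ) by norm_num, v_odd_int (by decide)]; norm_num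

lemma v_concrete {a b : ℤ} (e : ℕ) (ha : a % 2 = 1) (hb : b % 2 = 1) :
    ((a:ℚ)/(2^e*(b:ℚ)) ≠ 0) ∧ V ((a:ℚ)/(2^e*(b:ℚ))) = -(e:ℤ) := by
  have ha0 : (a:ℚ) ≠ 0 := Int.cast_ne_zero.mpr (by omega)
  have hb0 : (b:ℚ) ≠ 0 := Int.cast_ne_zero.mpr (by omega)
  have h2e : (2:ℚ)^e ≠ 0 := by positivity
  constructor
  · exact div_ne_zero ha0 (mul_ne_zero h2e hb0)
  · rw [v_div ha0 (mul_ne_zero h2e hb0), v_mul h2e hb0, v_pow (by norm_num) e, v_two,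
      v_odd_int ha, v_odd_int hb]
    ring

/-! ### The doubling recursion on `x`-coordinates -/

def qp (x : ℚ) : ℚ := 4*x^3 - 3*x^2 - 2*x - 55
def gp (x : ℚ) : ℚ := 6*x^2 - 3*x - 1
noncomputable def x2 (x : ℚ) : ℚ := (gp x)^2/(4*qp x) + 3/4 - 2*x
noncomputable def rr (x : ℚ) : ℚ := ((x - x2 x)*gp x - qp x)/qp x

lemma valq {x : ℚ} {e : ℤ} (hx : x ≠ 0) (hv : V x = -e) (he : 3 ≤ e) :
    qp x ≠ 0 ∧ V (qp x) = 2 - 3*e := by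
  have h3 : (4:ℚ)*x^3 ≠ 0 := by positivity
  have hv3 : V (4*x^3) = 2 - 3*e := by
    rw [v_mul (by norm_num) (by positivity), v_pow hx, v_four, hv]; push_cast; ring
  have h2 : (-3:ℚ)*x^2 ≠ 0 := by
    apply mul_ne_zero (by norm_num) (by positivity)
  have hv2 : V (-3*x^2) = -2*e := by
    rw [v_mul (by norm_num) (by positivity), v_pow hx, v_m3, hv]; push_cast; ring
  have h1 : (-2:ℚ)*x ≠ 0 := mul_ne_zero (by norm_num) hx
  have hv1 : V (-2*x) = 1 - e := by rw [v_mul (by norm_num) hx, v_m2, hv]; ring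
  have s1 := v_add h1 (show (-55:ℚ) ≠ 0 by norm_num) (by rw [hv1, v_m55]; omega)
  have s2 := v_add h2 s1.1 (by rw [hv2, s1.2, hv1]; omega)
  have s3 := v_add h3 s2.1 (by rw [hv3, s2.2, hv2]; omega)
  have hrw : qp x = 4*x^3 + (-3*x^2 + (-2*x + -55)) := by rw [qp]; ring
  rw [hrw]
  exact ⟨s3.1, by rw [s3.2, hv3]⟩

lemma valg {x : ℚ} {e : ℤ} (hx : x ≠ 0) (hv : V x = -e) (he : 3 ≤ e) :
    gp x ≠ 0 ∧ V (gp x) = 1 - 2*e := by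
  have h2 : (6:ℚ)*x^2 ≠ 0 := by positivity
  have hv2 : V (6*x^2) = 1 - 2*e := by
    rw [v_mul (by norm_num) (by positivity), v_pow hx, v_six, hv]; push_cast; ring
  have h1 : (-3:ℚ)*x ≠ 0 := mul_ne_zero (by norm_num) hx
  have hv1 : V (-3*x) = -e := by rw [v_mul (by norm_num) hx, v_m3, hv]; ring
  have s1 := v_add h1 (show (-1:ℚ) ≠ 0 by norm_num) (by rw [hv1, v_m1]; omega)
  have s2 := v_add h2 s1.1 (by rw [hv2, s1.2, hv1]; omega)
  have hrw : gp x = 6*x^2 + (-3*x + -1) := by rw [gp]; ring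
  rw [hrw]
  exact ⟨s2.1, by rw [s2.2, hv2]⟩

lemma valx2 {x : ℚ} {e : ℤ} (hx : x ≠ 0) (hv : V x = -e) (he : 3 ≤ e) :
    x2 x ≠ 0 ∧ V (x2 x) = -(e+2) := by
  obtain ⟨hq, hvq⟩ := valq hx hv he
  obtain ⟨hg, hvg⟩ := valg hx hv he
  have h4q : (4:ℚ)*qp x ≠ 0 := mul_ne_zero (by norm_num) hq
  have hc1 : gp x^2 / (4*qp x) ≠ 0 := div_ne_zero (pow_ne_zero _ hg) h4q
  have hvc1 : V (gp x^2 / (4*qp x)) = -2-e := by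
    rw [v_div (pow_ne_zero _ hg) h4q, v_pow hg, v_mul (by norm_num) hq, v_four, hvg, hvq]
    push_cast; ring
  have h1 : (-2:ℚ)*x ≠ 0 := mul_ne_zero (by norm_num) hx
  have hv1 : V (-2*x) = 1 - e := by rw [v_mul (by norm_num) hx, v_m2, hv]; ring
  have s1 := v_add hc1 (show (3/4:ℚ) ≠ 0 by norm_num) (by rw [hvc1, v_34]; omega)
  have s2 := v_add s1.1 h1 (by rw [s1.2, hvc1, hv1]; omega)
  have hrw : x2 x = (gp x^2/(4*qp x) + 3/4) + -2*x := by rw [x2]; ring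
  rw [hrw]
  exact ⟨s2.1, by rw [s2.2, s1.2, hvc1]; ring⟩

lemma q_x2_eq {x : ℚ} (hq : qp x ≠ 0) : qp (x2 x) = (rr x)^2 * qp x := by
  rw [rr, x2]
  generalize hq' : qp x = q at *
  simp only [qp, gp]
  field_simp
  rw [← hq', qp]
  ring

lemma x2_alt {x : ℚ} (hq : qp x ≠ 0) :
    x2 x = (gp x^2 + 3*qp x - 8*x*qp x)/(4*qp x) := by
  rw [x2]; field_simp; ring

/-! ### The field side: doubling of points -/

variable {F : Type*} [Field F] [CharZero F]

lemma castq (x : ℚ) : ((qp x : ℚ) : F) = 4*(x:F)^3 - 3*(x:F)^2 - 2*(x:F) - 55 := by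
  rw [qp]; push_cast; ring

lemma castg (x : ℚ) : ((gp x : ℚ) : F) = 6*(x:F)^2 - 3*(x:F) - 1 := by
  rw [gp]; push_cast; ring

lemma castrr (x : ℚ) : ((rr x : ℚ) : F) =
    (((x:F) - ((x2 x : ℚ):F))*((gp x : ℚ):F) - ((qp x : ℚ):F))/((qp x : ℚ):F) := by
  rw [rr]; push_cast; ring

omit [CharZero F] in
lemma some_congr {W : WeierstrassCurve.Affine F} {x y x' y' : F}
    (h : W.Nonsingular x y) (hx : x = x') (hy : y = y') :
    ∃ h' : W.Nonsingular x' y', WeierstrassCurve.Affine.Point.some _ _ h =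
      WeierstrassCurve.Affine.Point.some _ _ h' := by
  subst hx; subst hy; exact ⟨h, rfl⟩

lemma nonsing {x r : ℚ} {w : F} (hr : r ≠ 0) (hwne : w ≠ 0)
    (hw2 : ((r:F)*w)^2 = ((qp x : ℚ) : F)) :
    (X0_17 F).Nonsingular (x:F) (((r:F)*w - (x:F) - 1)/2) := by
  rw [WeierstrassCurve.Affine.nonsingular_iff]
  constructor
  · rw [WeierstrassCurve.Affine.equation_iff]
    rw [castq] at hw2
    simp only [X0_17]
    linear_combination hw2/4
  · right
    simp only [X0_17]
    intro hEq
    apply mul_ne_zero (show (r:F) ≠ 0 from Rat.cast_ne_zero.mpr hr) hwne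
    linear_combination hEq

variable [DecidableEq F]

open WeierstrassCurve.Affine WeierstrassCurve.Affine.Point in
lemma step_pt {x r : ℚ} {w : F} (hr : r ≠ 0) (hwne : w ≠ 0) (hq : qp x ≠ 0)
    (hq2 : qp (x2 x) ≠ 0)
    (hw2 : ((r:F)*w)^2 = ((qp x : ℚ) : F))
    (h : (X0_17 F).Nonsingular (x:F) (((r:F)*w - (x:F) - 1)/2)) :
    r * rr x ≠ 0 ∧ (((r * rr x : ℚ):F)*w)^2 = ((qp (x2 x) : ℚ) : F) ∧
    ∃ h' : (X0_17 F).Nonsingular ((x2 x : ℚ):F)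
        ((((r * rr x : ℚ):F)*w - ((x2 x : ℚ):F) - 1)/2),
      Point.some _ _ h + Point.some _ _ h = Point.some _ _ h' := by
  have hrF : (r:F) ≠ 0 := by exact_mod_cast Rat.cast_ne_zero.mpr hr
  have hu : (r:F)*w ≠ 0 := mul_ne_zero hrF hwne
  have hqF : ((qp x : ℚ):F) ≠ 0 := Rat.cast_ne_zero.mpr hq
  have hrrq : qp (x2 x) = (rr x)^2 * qp x := q_x2_eq hq
  have hrr : rr x ≠ 0 := by
    intro h0
    rw [h0] at hrrq
    apply hq2
    rw [hrrq]; ring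
  refine ⟨mul_ne_zero hr hrr, ?_, ?_⟩
  · have key : ((qp (x2 x) : ℚ) : F) = ((rr x : ℚ):F)^2 * ((qp x : ℚ):F) := by
      rw [hrrq]; push_cast; ring
    rw [key, ← hw2]; push_cast; ring
  · set Xf : F := (x:F) with hXf
    set Y : F := (((r:F)*w - (x:F) - 1)/2) with hY
    set u : F := (r:F)*w with hu_def
    have hw2' : u^2 = 4*Xf^3 - 3*Xf^2 - 2*Xf - 55 := by rw [hu_def, hw2, castq]
    set Q : F := 4*Xf^3 - 3*Xf^2 - 2*Xf - 55 with hQdef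
    set G : F := 6*Xf^2 - 3*Xf - 1 with hGdef
    have hQF : ((qp x : ℚ):F) = Q := by rw [castq]
    have hGF : ((gp x : ℚ):F) = G := by rw [castg]
    have hy : Y ≠ (X0_17 F).negY Xf Y := by
      simp only [X0_17, negY]
      intro hEq
      exact hu (by linear_combination hEq)
    have hYden : Y - (X0_17 F).negY Xf Y = u := by
      simp only [X0_17, negY]; rw [hY]; ring
    set L : F := (X0_17 F).slope Xf Xf Y Y with hLdef
    set NumF : F := 3*Xf^2 - 2*Xf - 1 - Y with hNdef
    have hL0 : L = NumF / u := by
      rw [hLdef, slope_of_Y_ne rfl hy, hYden]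
      simp only [X0_17]
      rw [hNdef]
      ring_nf
    have hLu : L * u = NumF := by rw [hL0, div_mul_cancel₀ _ hu]
    have hLQ : L * Q = NumF * u := by rw [← hw2']; linear_combination u * hLu
    have hx2F : ((x2 x : ℚ):F) = (G^2 + 3*Q - 8*Xf*Q)/(4*Q) := by
      rw [x2_alt hq]; push_cast; rw [hGF, hQF]
    have hQne : Q ≠ 0 := by rw [← hQF]; exact hqF
    have h4Q : (4*Q : F) ≠ 0 := by
      intro h0; exact hQne (by linear_combination h0/4)
    have hXeq : (X0_17 F).addX Xf Xf L = ((x2 x : ℚ):F) := by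
      rw [hx2F, eq_div_iff h4Q]
      simp only [addX, X0_17]
      linear_combination (4*L+4)*hLQ + 4*NumF*hLu - hw2' + hQdef
    have hrrF : ((rr x : ℚ):F) = ((Xf - ((x2 x : ℚ):F))*G - Q)/Q := by
      rw [castrr, hGF, hQF, hXf]
    have ha1 : (X0_17 F).a₁ = 1 := rfl
    have ha3 : (X0_17 F).a₃ = 1 := rfl
    have hYu : u = 2*Y + Xf + 1 := by rw [hY, hu_def, hXf]; ring
    have hrrQ : ((rr x : ℚ):F) * Q = (Xf - ((x2 x : ℚ):F))*G - Q := by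
      rw [hrrF, div_mul_cancel₀ _ hQne]
    have h2Y : 2 * ((X0_17 F).addY Xf Xf Y L) * Q =
        ((r:F) * ((rr x : ℚ):F) * w - ((x2 x : ℚ):F) - 1) * Q := by
      simp only [addY, negAddY, negY]
      rw [hXeq, ha1, ha3]
      linear_combination (-2*(((x2 x : ℚ):F) - Xf))*hLQ + (-u)*hrrQ +
        (2*(Xf - ((x2 x : ℚ):F))*u)*hNdef + (-(Xf - ((x2 x : ℚ):F))*u)*hGdef +
        (-(Xf - ((x2 x : ℚ):F)))*hw2' + ((Xf - ((x2 x : ℚ):F))*u + Q)*hYu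
    have hYeq : (X0_17 F).addY Xf Xf Y L =
        (((r * rr x : ℚ):F)*w - ((x2 x : ℚ):F) - 1)/2 := by
      have h2Y' := mul_right_cancel₀ hQne h2Y
      rw [eq_div_iff (two_ne_zero (α := F))]
      push_cast
      linear_combination h2Y'
    obtain ⟨h', hpt⟩ := some_congr (nonsingular_add h h fun hxy => hy hxy.2) hXeq hYeq
    exact ⟨h', by rw [add_self_of_Y_ne hy]; exact hpt⟩

/-! ### Points of infinite order -/

noncomputable def xc {W : WeierstrassCurve.Affine F} : W.Point → F
  | .zero => 0
  | @WeierstrassCurve.Affine.Point.some _ _ _ x _ _ => x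

open WeierstrassCurve.Affine WeierstrassCurve.Affine.Point in
theorem infOrder (w : F) (hwne : w ≠ 0) (x0 r0 : ℚ) (e0 : ℤ) (he0 : 3 ≤ e0)
    (hx0 : x0 ≠ 0) (hr0 : r0 ≠ 0) (hv0 : V x0 = -e0)
    (hw20 : ((r0:F)*w)^2 = ((qp x0 : ℚ):F)) :
    ∃ P : (X0_17 F).Point, ∀ n : ℕ, 0 < n → n • P ≠ 0 := by
  refine ⟨Point.some _ _ (nonsing hr0 hwne hw20), ?_⟩
  set P : (X0_17 F).Point := Point.some _ _ (nonsing hr0 hwne hw20) with hP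
  have key : ∀ k : ℕ, ∃ (x r : ℚ) (hx : x ≠ 0) (hr : r ≠ 0),
      V x = -(e0 + 2*k) ∧ ∃ hw2 : ((r:F)*w)^2 = ((qp x : ℚ):F),
      (2^k) • P = Point.some _ _ (nonsing hr hwne hw2) := by
    intro k
    induction k with
    | zero =>
      refine ⟨x0, r0, hx0, hr0, by rw [hv0]; push_cast; ring, hw20, ?_⟩
      rw [pow_zero, one_nsmul]
    | succ k ih =>
      obtain ⟨x, r, hx, hr, hv, hw2, heq⟩ := ih
      have he' : (3:ℤ) ≤ e0 + 2*k := by omega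
      have hq := (valq hx hv he').1
      obtain ⟨hx2, hvx2⟩ := valx2 hx hv he'
      have hq2 := (valq hx2 hvx2 (by omega)).1
      obtain ⟨hrr, hw2', h', hadd⟩ := step_pt hr hwne hq hq2 hw2 (nonsing hr hwne hw2)
      refine ⟨x2 x, r * rr x, hx2, hrr, by rw [hvx2]; push_cast; ring, hw2', ?_⟩
      have h2 : (2^(k+1)) • P = (2^k) • P + (2^k) • P := by
        rw [pow_succ, mul_nsmul, two_nsmul]
      rw [h2, heq, hadd]
  intro n hn h0
  have hmod : ∀ k : ℕ, (2^k) • P = (2^k % n) • P := by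
    intro k
    conv_lhs => rw [← Nat.div_add_mod (2^k) n]
    rw [add_nsmul, mul_nsmul, h0, smul_zero, zero_add]
  have hmaps : ∀ k ∈ Finset.range (n+1), 2^k % n ∈ Finset.range n := by
    intro k _
    exact Finset.mem_range.mpr (Nat.mod_lt _ hn)
  obtain ⟨k₁, hk₁, k₂, hk₂, hne, hfeq⟩ :=
    Finset.exists_ne_map_eq_of_card_lt_of_maps_to (by simp) hmaps
  have hPeq : (2^k₁) • P = (2^k₂) • P := by rw [hmod k₁, hmod k₂, hfeq]
  obtain ⟨xa, ra, hxa, hra, hva, hwa, heqa⟩ := key k₁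
  obtain ⟨xb, rb, hxb, hrb, hvb, hwb, heqb⟩ := key k₂
  rw [heqa, heqb] at hPeq
  have hxx : (xa : F) = (xb : F) := by
    have := congrArg xc hPeq
    simpa [xc] using this
  have hxab : xa = xb := by exact_mod_cast hxx
  apply hne
  have hee : -(e0 + 2*(k₁:ℤ)) = -(e0 + 2*(k₂:ℤ)) := by rw [← hva, ← hvb, hxab]
  omega

theorem main_case (z : ℝ) (c : ℚ) (hc : c ≠ 0) (hz : z^2 = (c:ℝ))
    (x0 s0 : ℚ) (e0 : ℤ) (he0 : 3 ≤ e0) (hx0 : x0 ≠ 0) (hs0 : s0 ≠ 0)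
    (hv0 : V x0 = -e0) (hqs : c * s0^2 = qp x0) :
    ∃ P : (X0_17 ℚ⟮z⟯).Point, ∀ n : ℕ, 0 < n → n • P ≠ 0 := by
  have hζ2 : (AdjoinSimple.gen ℚ z)^2 = ((c: ℚ⟮z⟯)) := by
    apply Subtype.ext
    push_cast
    simpa using hz
  have hζne : AdjoinSimple.gen ℚ z ≠ 0 := by
    intro h
    rw [h] at hζ2
    apply hc
    have h0 : ((c:ℚ⟮z⟯)) = 0 := by rw [← hζ2]; ring
    exact_mod_cast h0
  apply infOrder (AdjoinSimple.gen ℚ z) hζne x0 s0 e0 he0 hx0 hs0 hv0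
  rw [mul_pow, hζ2, ← hqs]
  push_cast
  ring

end X017aux

/-- For each `d ∈ {3, 5, 6, 7}`, the group `X₀(17)(ℚ(√d))` contains a point of infinite order. -/
theorem X0_17_infinite_order_point (d : ℕ) (hd : d ∈ ({3, 5, 6, 7} : Set ℕ))
    (z : ℝ) (hz : z ^ 2 = d) :
    ∃ P : (X0_17 ℚ⟮z⟯).Point, ∀ n : ℕ, 0 < n → n • P ≠ 0 := by
  simp only [Set.mem_insert_iff, Set.mem_singleton_iff] at hd
  rcases hd with rfl | rfl | rfl | rfl
  · exact X017aux.main_case z 3 (by norm_num) (by exact_mod_cast hz)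
      (((32357471:ℤ):ℚ)/(2^4*((61009:ℤ):ℚ))) (105013867865/482215136) 4 (by norm_num)
      (X017aux.v_concrete (a := 32357471) (b := 61009) 4 (by decide) (by decide)).1
      (by norm_num)
      (by exact_mod_cast (X017aux.v_concrete (a := 32357471) (b := 61009) 4
        (by decide) (by decide)).2)
      (by rw [X017aux.qp]; push_cast; norm_num)
  · exact X017aux.main_case z 5 (by norm_num) (by exact_mod_cast hz)
      (((5009:ℤ):ℚ)/(2^4*((81:ℤ):ℚ))) (115889/23328) 4 (by norm_num)
      (X017aux.v_concrete (a := 5009) (b := 81) 4 (by decide) (by decide)).1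
      (by norm_num)
      (by exact_mod_cast (X017aux.v_concrete (a := 5009) (b := 81) 4
        (by decide) (by decide)).2)
      (by rw [X017aux.qp]; push_cast; norm_num)
  · exact X017aux.main_case z 6 (by norm_num) (by exact_mod_cast hz)
      (((321021409:ℤ):ℚ)/(2^5*((3090675:ℤ):ℚ))) (3250640221723/1204621488000) 5 (by norm_num)
      (X017aux.v_concrete (a := 321021409) (b := 3090675) 5 (by decide) (by decide)).1
      (by norm_num)
      (by exact_mod_cast (X017aux.v_concrete (a := 321021409) (b := 3090675) 5
        (by decide) (by decide)).2)
      (by rw [X017aux.qp]; push_cast; norm_num)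
  · exact X017aux.main_case z 7 (by norm_num) (by exact_mod_cast hz)
      (((35482687910696111:ℤ):ℚ)/(2^6*((22007648295361:ℤ):ℚ)))
      (2486243555379950626244205/26430198251595437924096) 6 (by norm_num)
      (X017aux.v_concrete (a := 35482687910696111) (b := 22007648295361) 6
        (by decide) (by decide)).1
      (by norm_num)
      (by exact_mod_cast (X017aux.v_concrete (a := 35482687910696111) (b := 22007648295361) 6
        (by decide) (by decide)).2)
      (by rw [X017aux.qp]; push_cast; norm_num)
end

section
/- For each d ∈ {2, 3}, the group X₀(19)(Q(√d)) of Q(√d)-rational points of the modular curve X₀(19) contains a point of infinite order. -/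
open Polynomial IntermediateField NumberField

namespace X019Aux


/-- 2-adic value facts -/
lemma pn_pos {a : ℚ} (ha : a ≠ 0) : 0 < padicNorm 2 a :=
  lt_of_le_of_ne (padicNorm.nonneg _) (Ne.symm (padicNorm.nonzero ha))

lemma pn_zpow {a : ℚ} (ha : a ≠ 0) : ∃ z : ℤ, padicNorm 2 a = (2:ℚ) ^ z := by
  obtain ⟨z, hz⟩ := padicNorm.values_discrete (p := 2) ha
  exact ⟨-z, by push_cast at hz; exact hz⟩

lemma sq_zpow (z : ℤ) : ((2:ℚ) ^ z) ^ 2 = 2 ^ (2 * z) := by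
  rw [← zpow_natCast ((2:ℚ)^z) 2, ← zpow_mul]; ring_nf

lemma half_zpow (z : ℤ) : ((2:ℚ) ^ z) / 2 = 2 ^ (z - 1) := by
  rw [div_eq_mul_inv, ← zpow_neg_one (2:ℚ), ← zpow_add₀ (by norm_num : (2:ℚ) ≠ 0),
    sub_eq_add_neg]

lemma zpow_lt {i j : ℤ} (h : i < j) : (2:ℚ) ^ i < 2 ^ j :=
  zpow_lt_zpow_right₀ (by norm_num) h

lemma zpow_inj {i j : ℤ} (h : (2:ℚ) ^ i = 2 ^ j) : i = j := by
  by_contra hne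
  rcases lt_or_gt_of_ne hne with hlt | hlt
  · exact absurd h (ne_of_lt (zpow_lt hlt))
  · exact absurd h.symm (ne_of_lt (zpow_lt hlt))

/-- Square of the 2-adic absolute value on `ℚ(w)` where `w² = s·w + 2`,
in terms of the coordinates in the basis `(1, w)`. -/
def AA (a b : ℚ) : ℚ := max ((padicNorm 2 a) ^ 2) ((padicNorm 2 b) ^ 2 / 2)

lemma AA_nonneg (a b : ℚ) : 0 ≤ AA a b :=
  le_trans (by positivity) (le_max_left _ _)

lemma AA_zero : AA 0 0 = 0 := by
  simp [AA, padicNorm.zero]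

lemma AA_neg (a b : ℚ) : AA (-a) (-b) = AA a b := by
  simp [AA, padicNorm.neg]

lemma AA_eq_zero {a b : ℚ} (h : AA a b = 0) : a = 0 ∧ b = 0 := by
  have h1 : (padicNorm 2 a) ^ 2 ≤ 0 := h ▸ le_max_left _ _
  have h2 : (padicNorm 2 b) ^ 2 / 2 ≤ 0 := h ▸ le_max_right _ _
  constructor
  · by_contra ha
    have := pn_pos ha
    exact absurd h1 (not_le.mpr (by positivity))
  · by_contra hb
    have := pn_pos hb
    exact absurd h2 (not_le.mpr (by positivity))

lemma AA_ne_zero {a b : ℚ} (h : ¬(a = 0 ∧ b = 0)) : AA a b ≠ 0 :=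
  fun h0 => h (AA_eq_zero h0)

lemma AA_pos {a b : ℚ} (h : ¬(a = 0 ∧ b = 0)) : 0 < AA a b :=
  lt_of_le_of_ne (AA_nonneg a b) (Ne.symm (AA_ne_zero h))

lemma AA_exists_zpow {a b : ℚ} (h : ¬(a = 0 ∧ b = 0)) : ∃ k : ℤ, AA a b = 2 ^ k := by
  by_cases ha : a = 0
  · subst ha
    have hb : b ≠ 0 := fun hb => h ⟨rfl, hb⟩
    obtain ⟨z, hz⟩ := pn_zpow hb
    refine ⟨2 * z - 1, ?_⟩
    rw [AA, hz, padicNorm.zero, max_eq_right (by positivity), sq_zpow, half_zpow]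
  · by_cases hb : b = 0
    · subst hb
      obtain ⟨z, hz⟩ := pn_zpow ha
      refine ⟨2 * z, ?_⟩
      rw [AA, hz, padicNorm.zero, max_eq_left (le_trans (by norm_num : (0:ℚ)^2/2 ≤ 0) (by positivity)), sq_zpow]
    · obtain ⟨z, hz⟩ := pn_zpow ha
      obtain ⟨u, hu⟩ := pn_zpow hb
      rw [AA, hz, hu, sq_zpow, sq_zpow, half_zpow]
      rcases le_total ((2:ℚ) ^ (2*u-1)) ((2:ℚ) ^ (2*z)) with hle | hle
      · exact ⟨2*z, max_eq_left hle⟩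
      · exact ⟨2*u-1, max_eq_right hle⟩

lemma AA_add_le (a₁ b₁ a₂ b₂ : ℚ) :
    AA (a₁ + a₂) (b₁ + b₂) ≤ max (AA a₁ b₁) (AA a₂ b₂) := by
  have hn : ∀ q r : ℚ, (padicNorm 2 (q + r))^2 ≤ max ((padicNorm 2 q)^2) ((padicNorm 2 r)^2) := by
    intro q r
    have h := padicNorm.nonarchimedean (p := 2) (q := q) (r := r)
    calc (padicNorm 2 (q + r))^2 ≤ (max (padicNorm 2 q) (padicNorm 2 r))^2 :=
          pow_le_pow_left₀ (padicNorm.nonneg _) h 2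
      _ = max ((padicNorm 2 q)^2) ((padicNorm 2 r)^2) := by
          rcases le_total (padicNorm 2 q) (padicNorm 2 r) with h' | h'
          · rw [max_eq_right h', max_eq_right (pow_le_pow_left₀ (padicNorm.nonneg _) h' 2)]
          · rw [max_eq_left h', max_eq_left (pow_le_pow_left₀ (padicNorm.nonneg _) h' 2)]
  apply max_le
  · calc (padicNorm 2 (a₁ + a₂))^2 ≤ max ((padicNorm 2 a₁)^2) ((padicNorm 2 a₂)^2) := hn _ _
      _ ≤ max (AA a₁ b₁) (AA a₂ b₂) :=
        max_le_max (le_max_left _ _) (le_max_left _ _)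
  · calc (padicNorm 2 (b₁ + b₂))^2 / 2 ≤ max ((padicNorm 2 b₁)^2) ((padicNorm 2 b₂)^2) / 2 :=
          div_le_div_of_nonneg_right (hn _ _) (by norm_num) |>.trans_eq rfl
      _ = max ((padicNorm 2 b₁)^2 / 2) ((padicNorm 2 b₂)^2 / 2) := by
          rcases le_total ((padicNorm 2 b₁)^2) ((padicNorm 2 b₂)^2) with h' | h'
          · rw [max_eq_right h', max_eq_right (by linarith)]
          · rw [max_eq_left h', max_eq_left (by linarith)]
      _ ≤ max (AA a₁ b₁) (AA a₂ b₂) :=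
        max_le_max (le_max_right _ _) (le_max_right _ _)

lemma AA_add_eq_left {a₁ b₁ a₂ b₂ : ℚ} (h : AA a₂ b₂ < AA a₁ b₁) :
    AA (a₁ + a₂) (b₁ + b₂) = AA a₁ b₁ := by
  apply le_antisymm
  · have := AA_add_le a₁ b₁ a₂ b₂
    rwa [max_eq_left h.le] at this
  · have h2 : AA a₁ b₁ ≤ max (AA (a₁+a₂) (b₁+b₂)) (AA a₂ b₂) := by
      have e : a₁ = (a₁ + a₂) + (-a₂) := by ring
      have e' : b₁ = (b₁ + b₂) + (-b₂) := by ring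
      calc AA a₁ b₁ = AA ((a₁ + a₂) + (-a₂)) ((b₁ + b₂) + (-b₂)) := by rw [← e, ← e']
        _ ≤ max (AA (a₁+a₂) (b₁+b₂)) (AA (-a₂) (-b₂)) := AA_add_le _ _ _ _
        _ = max (AA (a₁+a₂) (b₁+b₂)) (AA a₂ b₂) := by rw [AA_neg]
    rcases le_or_gt (AA a₁ b₁) (AA (a₁+a₂) (b₁+b₂)) with h' | h'
    · exact h'
    · exact absurd h2 (not_le.mpr (max_lt h' h))

lemma pn_two : padicNorm 2 (2:ℚ) = 1/2 := by
  have := padicNorm.padicNorm_p (p := 2) (by norm_num)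
  push_cast at this
  rw [this]; norm_num

lemma pn_int_odd {n : ℤ} (h : ¬ (2:ℤ) ∣ n) : padicNorm 2 (n:ℚ) = 1 :=
  (padicNorm.int_eq_one_iff (p := 2) n).mpr (by exact_mod_cast h)

lemma AA_rat (q : ℚ) : AA q 0 = (padicNorm 2 q) ^ 2 := by
  rw [AA, padicNorm.zero, max_eq_left (le_trans (by norm_num : (0:ℚ)^2/2 ≤ 0) (by positivity))]

lemma AA_smul (q a b : ℚ) : AA (q * a) (q * b) = (padicNorm 2 q)^2 * AA a b := by
  rw [AA, AA, padicNorm.mul, padicNorm.mul, mul_pow, mul_pow, mul_div_assoc]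
  rcases le_total ((padicNorm 2 a)^2) ((padicNorm 2 b)^2 / 2) with h | h
  · rw [max_eq_right h, max_eq_right (by nlinarith [padicNorm.nonneg (p:=2) q, sq_nonneg (padicNorm 2 q)])]
  · rw [max_eq_left h, max_eq_left (by nlinarith [padicNorm.nonneg (p:=2) q, sq_nonneg (padicNorm 2 q)])]

lemma pn_sab {s : ℚ} (hs : s = 0 ∨ s = 2) (a b : ℚ) :
    padicNorm 2 (s * a * b) ≤ 1/2 * (padicNorm 2 a * padicNorm 2 b) := by
  rcases hs with rfl | rfl
  · simp only [zero_mul, padicNorm.zero]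
    exact mul_nonneg (by norm_num) (mul_nonneg (padicNorm.nonneg _) (padicNorm.nonneg _))
  · rw [padicNorm.mul, padicNorm.mul, pn_two]
    ring_nf
    exact le_refl _

/-- The norm form computes `AA`. -/
lemma pn_norm {s : ℚ} (hs : s = 0 ∨ s = 2) (a b : ℚ) :
    padicNorm 2 (a^2 + s*a*b - 2*b^2) = AA a b := by
  by_cases hb : b = 0
  · subst hb
    rw [AA, padicNorm.zero]
    rw [max_eq_left (le_trans (by norm_num : (0:ℚ)^2/2 ≤ 0) (by positivity))]
    rw [(by ring : a^2 + s*a*0 - 2*0^2 = a * a), padicNorm.mul, sq]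
  by_cases ha : a = 0
  · subst ha
    rw [AA, padicNorm.zero]
    rw [max_eq_right (le_trans (by norm_num : (0:ℚ)^2 ≤ 0) (by positivity))]
    rw [(by ring : (0:ℚ)^2 + s*0*b - 2*b^2 = -(2 * (b * b))), padicNorm.neg, padicNorm.mul,
      padicNorm.mul, pn_two, sq]
    ring
  obtain ⟨z, hz⟩ := pn_zpow ha
  obtain ⟨u, hu⟩ := pn_zpow hb
  have ha2 : padicNorm 2 (a^2) = (2:ℚ)^(2*z) := by
    rw [sq, padicNorm.mul, hz, ← sq, sq_zpow]
  have hb2 : padicNorm 2 (2*b^2) = (2:ℚ)^(2*u - 1) := by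
    rw [padicNorm.mul, pn_two, sq, padicNorm.mul, hu, ← sq, sq_zpow]
    rw [← half_zpow]; ring
  have hsab' : padicNorm 2 (s*a*b) ≤ (2:ℚ)^(z + u - 1) := by
    calc padicNorm 2 (s*a*b) ≤ 1/2 * (padicNorm 2 a * padicNorm 2 b) := pn_sab hs a b
      _ = (2:ℚ)^(z + u - 1) := by
          rw [hz, hu, ← zpow_add₀ (by norm_num : (2:ℚ) ≠ 0)]
          rw [← half_zpow]; ring
  have hAA : AA a b = max ((2:ℚ)^(2*z)) ((2:ℚ)^(2*u-1)) := by
    rw [AA, hz, hu, sq_zpow, sq_zpow, half_zpow]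
  rcases lt_trichotomy (2*u - 1) (2*z) with hlt | heq | hlt
  · -- a² dominates
    have h1 : padicNorm 2 (s*a*b - 2*b^2) < (2:ℚ)^(2*z) := by
      calc padicNorm 2 (s*a*b - 2*b^2) ≤ max (padicNorm 2 (s*a*b)) (padicNorm 2 (2*b^2)) :=
            padicNorm.sub
        _ < (2:ℚ)^(2*z) := by
            apply max_lt
            · exact lt_of_le_of_lt hsab' (zpow_lt (by omega))
            · rw [hb2]; exact zpow_lt (by omega)
    have hne : padicNorm 2 (s*a*b - 2*b^2) ≠ padicNorm 2 (a^2) := by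
      rw [ha2]; exact ne_of_lt h1
    calc padicNorm 2 (a^2 + s*a*b - 2*b^2)
        = padicNorm 2 ((s*a*b - 2*b^2) + a^2) := by ring_nf
      _ = max (padicNorm 2 (s*a*b - 2*b^2)) (padicNorm 2 (a^2)) :=
          padicNorm.add_eq_max_of_ne hne
      _ = (2:ℚ)^(2*z) := by rw [max_eq_right (ha2 ▸ h1.le), ha2]
      _ = AA a b := by rw [hAA, max_eq_left (zpow_lt hlt).le]
  · omega
  · -- 2b² dominates
    have h1 : padicNorm 2 (a^2 + s*a*b) < (2:ℚ)^(2*u-1) := by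
      calc padicNorm 2 (a^2 + s*a*b) ≤ max (padicNorm 2 (a^2)) (padicNorm 2 (s*a*b)) :=
            padicNorm.nonarchimedean
        _ < (2:ℚ)^(2*u-1) := by
            apply max_lt
            · rw [ha2]; exact zpow_lt (by omega)
            · exact lt_of_le_of_lt hsab' (zpow_lt (by omega))
    have hne : padicNorm 2 (a^2 + s*a*b) ≠ padicNorm 2 (-(2*b^2)) := by
      rw [padicNorm.neg, hb2]; exact ne_of_lt h1
    calc padicNorm 2 (a^2 + s*a*b - 2*b^2)
        = padicNorm 2 ((a^2 + s*a*b) + (-(2*b^2))) := by ring_nf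
      _ = max (padicNorm 2 (a^2 + s*a*b)) (padicNorm 2 (-(2*b^2))) :=
          padicNorm.add_eq_max_of_ne hne
      _ = (2:ℚ)^(2*u-1) := by
          rw [padicNorm.neg, hb2, max_eq_right h1.le]
      _ = AA a b := by rw [hAA, max_eq_right (zpow_lt hlt).le]

/-- Multiplicativity of `AA` with respect to multiplication in `ℚ(w)`, `w² = s·w + 2`. -/
lemma AA_mul {s : ℚ} (hs : s = 0 ∨ s = 2) (a₁ b₁ a₂ b₂ : ℚ) :
    AA (a₁*a₂ + 2*b₁*b₂) (a₁*b₂ + a₂*b₁ + s*b₁*b₂) = AA a₁ b₁ * AA a₂ b₂ := by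
  rw [← pn_norm hs, ← pn_norm hs, ← pn_norm hs, ← padicNorm.mul]
  congr 1
  ring

section ElementLevel

variable {F : Type*} [Field F] [CharZero F] {w : F} {s : ℚ}

/-- Uniqueness of representations in the basis `(1, w)` for `w` irrational. -/
lemma rep_unique (hirr : ∀ q : ℚ, (q : F) ≠ w) {a b a' b' : ℚ}
    (h : (a : F) + (b : F) * w = (a' : F) + (b' : F) * w) : a = a' ∧ b = b' := by
  by_cases hb : b = b'
  · subst hb
    have : ((a : F)) = ((a' : F)) := by linear_combination h
    exact ⟨by exact_mod_cast this, rfl⟩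
  · exfalso
    have hbb : (b' : F) - (b : F) ≠ 0 := by
      have h0 : ((b' - b : ℚ) : F) ≠ 0 := by
        rw [Ne, Rat.cast_eq_zero, sub_eq_zero]
        exact fun hc => hb hc.symm
      push_cast at h0
      exact h0
    apply hirr ((a - a') / (b' - b))
    push_cast
    rw [div_eq_iff hbb]
    linear_combination h

/-- Multiplication rule in the basis `(1, w)`, where `w² = s·w + 2`. -/
lemma mul_rep (hw : w ^ 2 = (s : F) * w + 2) (a₁ b₁ a₂ b₂ : ℚ) :
    ((a₁ : F) + (b₁ : F) * w) * ((a₂ : F) + (b₂ : F) * w) =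
      ((a₁ * a₂ + 2 * b₁ * b₂ : ℚ) : F) + ((a₁ * b₂ + a₂ * b₁ + s * b₁ * b₂ : ℚ) : F) * w := by
  push_cast
  linear_combination ((b₁ : F) * (b₂ : F)) * hw

/-- Division rule: quotients have representations, with multiplicative `AA`. -/
lemma div_rep (hw : w ^ 2 = (s : F) * w + 2) (hs : s = 0 ∨ s = 2)
    {x₁ x₂ : F} {a₁ b₁ a₂ b₂ : ℚ}
    (h₁ : x₁ = (a₁ : F) + (b₁ : F) * w) (h₂ : x₂ = (a₂ : F) + (b₂ : F) * w) (hx₂ : x₂ ≠ 0) :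
    ∃ a b : ℚ, x₁ / x₂ = (a : F) + (b : F) * w ∧ AA a b * AA a₂ b₂ = AA a₁ b₁ := by
  have hab : ¬(a₂ = 0 ∧ b₂ = 0) := by
    rintro ⟨rfl, rfl⟩
    exact hx₂ (by rw [h₂]; push_cast; ring)
  have hN : (a₂^2 + s*a₂*b₂ - 2*b₂^2) ≠ 0 := by
    intro h0
    exact AA_ne_zero hab (by rw [← pn_norm hs, h0, padicNorm.zero])
  set N := a₂^2 + s*a₂*b₂ - 2*b₂^2 with hNdef
  refine ⟨(a₁*(a₂ + s*b₂) - 2*b₁*b₂) / N, (-(a₁*b₂) + (a₂ + s*b₂)*b₁ - s*b₁*b₂) / N, ?_, ?_⟩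
  · rw [div_eq_iff hx₂, h₁, h₂, mul_rep hw]
    have e1 : ((a₁*(a₂ + s*b₂) - 2*b₁*b₂)/N) * a₂ + 2 * ((-(a₁*b₂) + (a₂ + s*b₂)*b₁ - s*b₁*b₂)/N) * b₂ = a₁ := by
      field_simp
      ring
    have e2 : ((a₁*(a₂ + s*b₂) - 2*b₁*b₂)/N) * b₂ + a₂ * ((-(a₁*b₂) + (a₂ + s*b₂)*b₁ - s*b₁*b₂)/N) + s * ((-(a₁*b₂) + (a₂ + s*b₂)*b₁ - s*b₁*b₂)/N) * b₂ = b₁ := by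
      field_simp
      ring
    rw [e1, e2]
  · have := AA_mul hs ((a₁*(a₂ + s*b₂) - 2*b₁*b₂)/N) ((-(a₁*b₂) + (a₂ + s*b₂)*b₁ - s*b₁*b₂)/N) a₂ b₂
    rw [← this]
    congr 1
    · field_simp
      ring
    · field_simp
      ring

end ElementLevel

section Step

variable {F : Type*} [Field F] [CharZero F] [DecidableEq F] {w : F} {s : ℚ}

lemma zpow_le {i j : ℤ} (h : i ≤ j) : (2:ℚ) ^ i ≤ 2 ^ j :=
  zpow_le_zpow_right₀ (by norm_num) h

lemma zpow_mul_zpow (i j : ℤ) : (2:ℚ) ^ i * 2 ^ j = 2 ^ (i + j) :=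
  (zpow_add₀ (by norm_num) i j).symm

lemma pn_neg_nine : padicNorm 2 (-9 : ℚ) = 1 := by
  have : ((-9 : ℤ) : ℚ) = (-9 : ℚ) := by norm_num
  rw [← this, pn_int_odd (by decide)]

lemma pn_three : padicNorm 2 (3 : ℚ) = 1 := by
  have : ((3 : ℤ) : ℚ) = (3 : ℚ) := by norm_num
  rw [← this, pn_int_odd (by decide)]

lemma pn_neg_fifteen : padicNorm 2 (-15 : ℚ) = 1 := by
  have : ((-15 : ℤ) : ℚ) = (-15 : ℚ) := by norm_num
  rw [← this, pn_int_odd (by decide)]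

open WeierstrassCurve.Affine in
/-- The key doubling step: if a point on `X₀(19)` has `x`-coordinate with
2-adic absolute value `> 1`, then doubling multiplies that absolute value by `16`. -/
theorem step (hw : w ^ 2 = (s : F) * w + 2) (hs : s = 0 ∨ s = 2)
    (hirr : ∀ q : ℚ, (q : F) ≠ w) {x y : F}
    (heq : (X0_19 F).Equation x y)
    {a b c e : ℚ} (hx : x = (a : F) + (b : F) * w) (hy : y = (c : F) + (e : F) * w)
    (hA : 1 < AA a b) :
    y ≠ (X0_19 F).negY x y ∧
    ∃ a' b' c' e' : ℚ,
      (X0_19 F).addX x x ((X0_19 F).slope x x y y) = (a' : F) + (b' : F) * w ∧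
      (X0_19 F).addY x x y ((X0_19 F).slope x x y y) = (c' : F) + (e' : F) * w ∧
      AA a' b' = 16 * AA a b := by
  have ha₁ : (X0_19 F).a₁ = 0 := rfl
  have ha₂ : (X0_19 F).a₂ = 1 := rfl
  have ha₃ : (X0_19 F).a₃ = 1 := rfl
  have ha₄ : (X0_19 F).a₄ = -9 := rfl
  have ha₆ : (X0_19 F).a₆ = -15 := rfl
  have heq2 : y^2 + y = x^3 + x^2 - 9*x - 15 := by
    have h0 := ((X0_19 F).equation_iff x y).mp heq
    rw [ha₁, ha₂, ha₃, ha₄, ha₆] at h0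
    linear_combination h0
  have hab : ¬(a = 0 ∧ b = 0) := by
    rintro ⟨rfl, rfl⟩
    rw [AA_zero] at hA
    norm_num at hA
  obtain ⟨k, hk⟩ := AA_exists_zpow hab
  have hkpos : 0 < k := by
    by_contra hle
    push_neg at hle
    have h1 : AA a b ≤ 1 := hk ▸ (zpow_zero (2:ℚ) ▸ zpow_le hle)
    exact absurd hA (not_lt.mpr h1)
  -- x² and x³
  obtain ⟨p2, q2, hx2, hA2⟩ : ∃ p q : ℚ, x^2 = (p:F) + (q:F)*w ∧ AA p q = 2^(2*k) := by
    refine ⟨_, _, by rw [sq, hx, mul_rep hw], ?_⟩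
    rw [AA_mul hs, hk, zpow_mul_zpow]
    congr 1
    ring
  obtain ⟨p3, q3, hx3, hA3⟩ : ∃ p q : ℚ, x^3 = (p:F) + (q:F)*w ∧ AA p q = 2^(3*k) := by
    refine ⟨_, _, by rw [show (3:ℕ) = 2 + 1 from rfl, pow_succ, hx2, hx, mul_rep hw], ?_⟩
    rw [AA_mul hs, hA2, hk, zpow_mul_zpow]
    congr 1
    ring
  -- RHS of the curve equation
  have hRrep : x^3 + x^2 - 9*x - 15 =
      ((p3 + (p2 + ((-9)*a + -15)) : ℚ):F) + ((q3 + (q2 + ((-9)*b + 0)) : ℚ):F)*w := by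
    rw [hx3, hx2, hx]
    push_cast
    ring
  have hArest : AA ((-9)*a + -15) ((-9)*b + 0) ≤ 2^k := by
    calc AA ((-9)*a + -15) ((-9)*b + 0) ≤ max (AA ((-9)*a) ((-9)*b)) (AA (-15) 0) :=
          AA_add_le _ _ _ _
      _ ≤ 2^k := by
          apply max_le
          · rw [AA_smul, pn_neg_nine, hk]
            norm_num
          · rw [AA_rat, pn_neg_fifteen]
            calc (1:ℚ)^2 = 2^(0:ℤ) := by norm_num
              _ ≤ 2^k := zpow_le hkpos.le
  have hAmid : AA (p2 + ((-9)*a + -15)) (q2 + ((-9)*b + 0)) ≤ 2^(2*k) := by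
    calc AA (p2 + ((-9)*a + -15)) (q2 + ((-9)*b + 0))
        ≤ max (AA p2 q2) (AA ((-9)*a + -15) ((-9)*b + 0)) := AA_add_le _ _ _ _
      _ ≤ 2^(2*k) := max_le (le_of_eq hA2) (le_trans hArest (zpow_le (by omega)))
  have hAR : AA (p3 + (p2 + ((-9)*a + -15))) (q3 + (q2 + ((-9)*b + 0))) = 2^(3*k) := by
    rw [AA_add_eq_left (lt_of_le_of_lt hAmid (hA3 ▸ zpow_lt (by omega)))]
    exact hA3
  -- y² and the LHS
  obtain ⟨r1, r2, hy2, hAy2⟩ : ∃ p q : ℚ, y^2 = (p:F) + (q:F)*w ∧ AA p q = AA c e * AA c e :=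
    ⟨_, _, by rw [sq, hy, mul_rep hw], AA_mul hs c e c e⟩
  have hLrep : y^2 + y = ((r1 + c : ℚ):F) + ((r2 + e : ℚ):F)*w := by
    rw [hy2, hy]
    push_cast
    ring
  obtain ⟨hpair1, hpair2⟩ := rep_unique hirr (by rw [← hLrep, heq2, hRrep] :
    ((r1 + c : ℚ):F) + ((r2 + e : ℚ):F)*w =
      ((p3 + (p2 + ((-9)*a + -15)) : ℚ):F) + ((q3 + (q2 + ((-9)*b + 0)) : ℚ):F)*w)
  have h3kpos : (0:ℤ) < 3*k := by omega
  have hAy : 1 < AA c e := by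
    by_contra hle
    push_neg at hle
    have h1 : AA (r1 + c) (r2 + e) ≤ 1 := by
      calc AA (r1 + c) (r2 + e) ≤ max (AA r1 r2) (AA c e) := AA_add_le _ _ _ _
        _ ≤ 1 := max_le (by rw [hAy2]; nlinarith [AA_nonneg c e]) hle
    rw [hpair1, hpair2, hAR] at h1
    have := zpow_lt h3kpos
    rw [zpow_zero] at this
    linarith
  have hce : ¬(c = 0 ∧ e = 0) := by
    rintro ⟨rfl, rfl⟩
    rw [AA_zero] at hAy
    norm_num at hAy
  obtain ⟨t, ht⟩ := AA_exists_zpow hce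
  have htt : t + t = 3*k := by
    have hrep12 : AA (r1 + c) (r2 + e) = AA c e * AA c e := by
      rw [AA_add_eq_left (by rw [hAy2]; nlinarith : AA c e < AA r1 r2)]
      exact hAy2
    rw [hpair1, hpair2, hAR, ht, zpow_mul_zpow] at hrep12
    exact (zpow_inj hrep12.symm)
  obtain ⟨m, hkm, htm, hm1⟩ : ∃ m : ℤ, k = 2*m ∧ t = 3*m ∧ 1 ≤ m := ⟨t - k, by omega, by omega, by omega⟩
  -- the vertical line quantity D = y - negY = 2y + 1
  have hnegY : (X0_19 F).negY x y = -y - 1 := by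
    rw [WeierstrassCurve.Affine.negY, ha₁, ha₃]
    ring
  have hDrep : y - (X0_19 F).negY x y = ((2*c + 1 : ℚ):F) + ((2*e + 0 : ℚ):F)*w := by
    rw [hnegY, hy]
    push_cast
    ring
  have h2sq : (padicNorm 2 (2:ℚ))^2 = (2:ℚ)^(-2 : ℤ) := by
    rw [pn_two]
    norm_num
  have hAD : AA (2*c + 1) (2*e + 0) = 2^(3*m - 2) := by
    have h2c : AA (2*c) (2*e) = 2^(3*m - 2) := by
      rw [AA_smul, h2sq, ht, htm, zpow_mul_zpow]
      congr 1
      ring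
    have h1lt : AA 1 0 < AA (2*c) (2*e) := by
      rw [AA_rat, padicNorm.one, h2c, one_pow]
      calc (1:ℚ) = 2^(0:ℤ) := by norm_num
        _ < 2^(3*m - 2) := zpow_lt (by omega)
    calc AA (2*c + 1) (2*e + 0) = AA (2*c) (2*e) := AA_add_eq_left h1lt
      _ = 2^(3*m - 2) := h2c
  have hYne : y ≠ (X0_19 F).negY x y := by
    intro hcon
    have h0 : ((2*c + 1 : ℚ):F) + ((2*e + 0 : ℚ):F)*w = ((0:ℚ):F) + ((0:ℚ):F)*w := by
      rw [← hDrep, sub_eq_zero_of_eq hcon]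
      norm_num
    obtain ⟨h1, h2⟩ := rep_unique hirr h0
    rw [h1, h2, AA_zero] at hAD
    have := zpow_pos (by norm_num : (0:ℚ) < 2) (3*m - 2)
    linarith
  -- the slope
  have hslope : (X0_19 F).slope x x y y =
      (3*x^2 + 2*(X0_19 F).a₂*x + (X0_19 F).a₄ - (X0_19 F).a₁*y) / (y - (X0_19 F).negY x y) :=
    slope_of_Y_ne rfl hYne
  have hnum : 3*x^2 + 2*(X0_19 F).a₂*x + (X0_19 F).a₄ - (X0_19 F).a₁*y =
      ((3*p2 + (2*a + -9) : ℚ):F) + ((3*q2 + (2*b + 0) : ℚ):F)*w := by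
    rw [ha₁, ha₂, ha₄, hx2, hx]
    push_cast
    ring
  have hAnum : AA (3*p2 + (2*a + -9)) (3*q2 + (2*b + 0)) = 2^(4*m) := by
    have h3 : AA (3*p2) (3*q2) = 2^(4*m) := by
      rw [AA_smul, pn_three, hA2, hkm]
      rw [one_pow, one_mul]
      congr 1
      ring
    have hrest : AA (2*a + -9) (2*b + 0) < 2^(4*m) := by
      calc AA (2*a + -9) (2*b + 0) ≤ max (AA (2*a) (2*b)) (AA (-9) 0) := AA_add_le _ _ _ _
        _ < 2^(4*m) := by
            apply max_lt
            · rw [AA_smul, h2sq, hk, hkm, zpow_mul_zpow]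
              exact zpow_lt (by omega)
            · rw [AA_rat, pn_neg_nine, one_pow]
              calc (1:ℚ) = 2^(0:ℤ) := by norm_num
                _ < 2^(4*m) := zpow_lt (by omega)
    rw [AA_add_eq_left (h3 ▸ hrest)]
    exact h3
  have hDne : y - (X0_19 F).negY x y ≠ 0 := sub_ne_zero_of_ne hYne
  obtain ⟨aL, bL, hLrep2, hLA⟩ := div_rep hw hs hnum hDrep hDne
  have hAL : AA aL bL = 2^(m + 2) := by
    rw [hAD, hAnum] at hLA
    have h2ne : ((2:ℚ)^(3*m - 2)) ≠ 0 := by positivity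
    have := eq_div_of_mul_eq h2ne hLA
    rw [this, ← zpow_sub₀ (by norm_num : (2:ℚ) ≠ 0)]
    congr 1
    ring
  have hLfull : (X0_19 F).slope x x y y = (aL:F) + (bL:F)*w := by
    rw [hslope]
    exact hLrep2
  -- addX
  obtain ⟨pL, qL, hL2, hAL2⟩ : ∃ p q : ℚ,
      ((X0_19 F).slope x x y y)^2 = (p:F) + (q:F)*w ∧ AA p q = 2^(2*m + 4) := by
    refine ⟨_, _, by rw [sq, hLfull, mul_rep hw], ?_⟩
    rw [AA_mul hs, hAL, zpow_mul_zpow]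
    congr 1
    ring
  have haddX : (X0_19 F).addX x x ((X0_19 F).slope x x y y) =
      ((X0_19 F).slope x x y y)^2 + (X0_19 F).a₁*((X0_19 F).slope x x y y)
        - (X0_19 F).a₂ - x - x := rfl
  have hxX : (X0_19 F).addX x x ((X0_19 F).slope x x y y) =
      ((pL + (-1 + (-2)*a) : ℚ):F) + ((qL + (0 + (-2)*b) : ℚ):F)*w := by
    rw [haddX, ha₁, ha₂, hL2, hx]
    push_cast
    ring
  have hAX : AA (pL + (-1 + (-2)*a)) (qL + (0 + (-2)*b)) = 16 * AA a b := by
    have hrest : AA (-1 + (-2)*a) (0 + (-2)*b) < 2^(2*m + 4) := by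
      calc AA (-1 + (-2)*a) (0 + (-2)*b) ≤ max (AA (-1) 0) (AA ((-2)*a) ((-2)*b)) :=
            AA_add_le _ _ _ _
        _ < 2^(2*m + 4) := by
            apply max_lt
            · rw [AA_rat, padicNorm.neg, padicNorm.one, one_pow]
              calc (1:ℚ) = 2^(0:ℤ) := by norm_num
                _ < 2^(2*m + 4) := zpow_lt (by omega)
            · rw [AA_smul, padicNorm.neg, h2sq, hk, hkm, zpow_mul_zpow]
              exact zpow_lt (by omega)
    rw [AA_add_eq_left (hAL2 ▸ hrest), hAL2, hk, hkm]
    rw [show (16:ℚ) = 2^(4:ℤ) by norm_num, zpow_mul_zpow]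
    congr 1
    ring
  -- addY
  have hxmx : (X0_19 F).addX x x ((X0_19 F).slope x x y y) - x =
      (((pL + (-1 + (-2)*a)) + -a : ℚ):F) + (((qL + (0 + (-2)*b)) + -b : ℚ):F)*w := by
    rw [hxX, hx]
    push_cast
    ring
  have haddY : (X0_19 F).addY x x y ((X0_19 F).slope x x y y) =
      -(((X0_19 F).slope x x y y) * ((X0_19 F).addX x x ((X0_19 F).slope x x y y) - x) + y)
        - (X0_19 F).a₁ * ((X0_19 F).addX x x ((X0_19 F).slope x x y y)) - (X0_19 F).a₃ := rfl
  refine ⟨hYne, pL + (-1 + (-2)*a), qL + (0 + (-2)*b), ?_, ?_, hxX, ?_, hAX⟩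
  · exact -((aL * ((pL + (-1 + (-2)*a)) + -a) + 2*bL*((qL + (0 + (-2)*b)) + -b)) + c) - 1
  · exact -((aL * ((qL + (0 + (-2)*b)) + -b) + ((pL + (-1 + (-2)*a)) + -a)*bL
      + s*bL*((qL + (0 + (-2)*b)) + -b)) + e)
  · rw [haddY, ha₁, ha₃, hxmx, hLfull, mul_rep hw, hy]
    push_cast
    ring

end Step

open WeierstrassCurve.Affine in
/-- Points on `X₀(19)` whose `x`-coordinate has 2-adic absolute value `> 1`
have infinite order. -/
theorem main_aux {F : Type*} [Field F] [CharZero F] [DecidableEq F] (w : F) (s : ℚ)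
    (hw : w ^ 2 = (s : F) * w + 2) (hs : s = 0 ∨ s = 2) (hirr : ∀ q : ℚ, (q : F) ≠ w)
    {x y : F} (h : (X0_19 F).Nonsingular x y) (a b c e : ℚ)
    (hx : x = (a : F) + (b : F) * w) (hy : y = (c : F) + (e : F) * w) (hA : 1 < AA a b) :
    ∀ n : ℕ, 0 < n → n • (Point.some _ _ h) ≠ 0 := by
  -- the invariant: doubling keeps points affine and multiplies `AA` of the abscissa by 16
  have inv : ∀ k : ℕ, ∃ (x' y' : F) (h' : (X0_19 F).Nonsingular x' y') (a' b' c' e' : ℚ),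
      (2^k • (Point.some _ _ h) = Point.some _ _ h') ∧ x' = (a' : F) + (b' : F) * w ∧
      y' = (c' : F) + (e' : F) * w ∧ AA a' b' = 16^k * AA a b := by
    intro k
    induction k with
    | zero =>
      exact ⟨x, y, h, a, b, c, e, by rw [pow_zero, one_nsmul], hx, hy, by rw [pow_zero, one_mul]⟩
    | succ k ih =>
      obtain ⟨x', y', h', a', b', c', e', hP, hx', hy', hA'⟩ := ih
      have h16 : (1:ℚ) ≤ 16^k := one_le_pow₀ (by norm_num)
      have hA1 : 1 < AA a' b' := by
        rw [hA']
        nlinarith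
      obtain ⟨hYne, a'', b'', c'', e'', hxX, hyY, hAX⟩ := step hw hs hirr h'.1 hx' hy' hA1
      refine ⟨_, _, nonsingular_add h' h' (fun hxy => hYne hxy.right), a'', b'', c'', e'', ?_, hxX, hyY, ?_⟩
      · rw [pow_succ, mul_comm, mul_smul, hP, two_nsmul, Point.add_self_of_Y_ne hYne]
      · rw [hAX, hA']
        ring
  -- hence the doubling orbit is injective
  have dist : ∀ i j : ℕ, 2^i • (Point.some _ _ h) = 2^j • (Point.some _ _ h) → i = j := by
    intro i j hij
    obtain ⟨xi, yi, hi, ai, bi, ci, ei, hPi, hxi, hyi, hAi⟩ := inv i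
    obtain ⟨xj, yj, hj, aj, bj, cj, ej, hPj, hxj, hyj, hAj⟩ := inv j
    rw [hPi, hPj] at hij
    have hxeq : xi = xj := by
      cases hij
      rfl
    have hrep : (ai : F) + (bi : F) * w = (aj : F) + (bj : F) * w := by
      rw [← hxi, ← hxj, hxeq]
    obtain ⟨hae, hbe⟩ := rep_unique hirr hrep
    have hAA0 : AA a b ≠ 0 := by
      intro h0
      rw [h0] at hA
      norm_num at hA
    have h16 : (16:ℚ)^i = 16^j := by
      have : (16:ℚ)^i * AA a b = 16^j * AA a b := by
        rw [← hAi, ← hAj, hae, hbe]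
      exact mul_right_cancel₀ hAA0 this
    have h16' : (16:ℕ)^i = 16^j := by exact_mod_cast h16
    exact Nat.pow_right_injective (by norm_num) h16'
  -- conclude by pigeonhole
  intro n hn hcon
  haveI : NeZero n := ⟨hn.ne'⟩
  have hninj : ¬ Function.Injective (fun k : Fin (n+1) => ((2 : ZMod n))^(k:ℕ)) := by
    intro hinj
    have hcard := Fintype.card_le_of_injective _ hinj
    rw [Fintype.card_fin, ZMod.card] at hcard
    omega
  rw [Function.Injective] at hninj
  push_neg at hninj
  obtain ⟨i, j, hij, hne⟩ := hninj
  have h0 : ((2^(i:ℕ) - 2^(j:ℕ) : ℤ) : ZMod n) = 0 := by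
    push_cast
    rw [hij]
    ring
  obtain ⟨q, hq⟩ := (ZMod.intCast_zmod_eq_zero_iff_dvd _ _).mp h0
  have hsmul : ((2^(i:ℕ) : ℤ)) • (Point.some _ _ h) = ((2^(j:ℕ) : ℤ)) • (Point.some _ _ h) := by
    have hsub : ((2^(i:ℕ) : ℤ)) • (Point.some _ _ h) - ((2^(j:ℕ) : ℤ)) • (Point.some _ _ h)
        = ((2^(i:ℕ) - 2^(j:ℕ) : ℤ)) • (Point.some _ _ h) := (sub_zsmul _ _ _).symm
    have hz : ((2^(i:ℕ) - 2^(j:ℕ) : ℤ)) • (Point.some _ _ h) = 0 := by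
      rw [hq, mul_comm, mul_zsmul]
      have hns : (n : ℤ) • (Point.some _ _ h) = 0 := by
        rw [natCast_zsmul, hcon]
      rw [hns, smul_zero]
    rw [← sub_eq_zero, hsub, hz]
  have hnat : (2^(i:ℕ)) • (Point.some _ _ h) = (2^(j:ℕ)) • (Point.some _ _ h) := by
    have h1 := hsmul
    rw [show ((2:ℤ)^(i:ℕ)) = (((2^(i:ℕ) : ℕ)) : ℤ) by push_cast; ring,
      show ((2:ℤ)^(j:ℕ)) = (((2^(j:ℕ) : ℕ)) : ℤ) by push_cast; ring,
      natCast_zsmul, natCast_zsmul] at h1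
    exact h1
  exact hne (Fin.ext (dist _ _ hnat))

end X019Aux

open WeierstrassCurve.Affine X019Aux in
/-- For each `d ∈ {2, 3}`, the group `X₀(19)(ℚ(√d))` contains a point of infinite order. -/
theorem X0_19_infinite_order_point (d : ℕ) (hd : d ∈ ({2, 3} : Set ℕ))
    (z : ℝ) (hz : z ^ 2 = d) :
    ∃ P : (X0_19 ℚ⟮z⟯).Point, ∀ n : ℕ, 0 < n → n • P ≠ 0 := by
  have hd' : d = 2 ∨ d = 3 := by simpa using hd
  have hzK : z ∈ ℚ⟮z⟯ := IntermediateField.mem_adjoin_simple_self ℚ z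
  set ζ : ℚ⟮z⟯ := ⟨z, hzK⟩ with hζdef
  have hζ : (ζ : ℝ) = z := rfl
  rcases hd' with rfl | rfl
  · -- d = 2 : take w = ζ = ±√2, s = 0
    have hw2 : ζ^2 = 2 := by
      apply Subtype.coe_injective
      push_cast
      rw [hz]
      norm_cast
    have hw : ζ^2 = ((0:ℚ) : ℚ⟮z⟯) * ζ + 2 := by
      rw [hw2]
      push_cast
      ring
    have hζ0 : ζ ≠ 0 := by
      intro h0
      rw [h0] at hw2
      have : ((0:ℚ⟮z⟯)^2 : ℚ⟮z⟯) = 0 := by norm_num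
      rw [this] at hw2
      exact two_ne_zero hw2.symm
    have hirr : ∀ q : ℚ, (q : ℚ⟮z⟯) ≠ ζ := by
      intro q hq
      have hcoe : ((q : ℚ⟮z⟯) : ℝ) = (q : ℝ) := by push_cast; rfl
      have hqz : (q : ℝ) = z := by rw [← hcoe, hq, hζ]
      have hq2 : (q:ℝ)^2 = 2 := by rw [hqz, hz]; norm_num
      have h₁ : Real.sqrt 2 = |(q:ℝ)| := by
        rw [← Real.sqrt_sq_eq_abs, hq2]
      exact irrational_sqrt_two (by rw [h₁]; exact ⟨|q|, by push_cast; rfl⟩)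
    set x : ℚ⟮z⟯ := ((17/2 : ℚ) : ℚ⟮z⟯) + ((0 : ℚ) : ℚ⟮z⟯) * ζ with hxdef
    set y : ℚ⟮z⟯ := ((-1/2 : ℚ) : ℚ⟮z⟯) + ((69/4 : ℚ) : ℚ⟮z⟯) * ζ with hydef
    have heq : (X0_19 ℚ⟮z⟯).Equation x y := by
      rw [WeierstrassCurve.Affine.equation_iff]
      show y^2 + 0*x*y + 1*y = x^3 + 1*x^2 + (-9)*x + (-15)
      rw [hxdef, hydef]
      push_cast
      linear_combination ((69/4 : ℚ⟮z⟯))^2 * hw2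
    have hns : (X0_19 ℚ⟮z⟯).Nonsingular x y := by
      rw [WeierstrassCurve.Affine.nonsingular_iff]
      refine ⟨heq, Or.inr ?_⟩
      show y ≠ -y - 0*x - 1
      intro hcon
      apply hζ0
      rw [hydef, hxdef] at hcon
      push_cast at hcon
      have h692 : ((69/2 : ℚ⟮z⟯)) * ζ = 0 := by linear_combination hcon
      have h69 : ((69/2 : ℚ⟮z⟯)) ≠ 0 := by norm_num
      exact (mul_eq_zero.mp h692).resolve_left h69
    have hA : 1 < AA (17/2) 0 := by
      have hpn : padicNorm 2 (17/2 : ℚ) = 2 := by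
        rw [show (17/2 : ℚ) = (17:ℚ)/(2:ℚ) by norm_num, padicNorm.div, pn_two,
          show ((17:ℚ)) = ((17:ℤ):ℚ) by norm_num, pn_int_odd (by decide)]
        norm_num
      rw [AA_rat, hpn]
      norm_num
    exact ⟨WeierstrassCurve.Affine.Point.some _ _ hns,
      main_aux ζ 0 hw (Or.inl rfl) hirr hns (17/2) 0 (-1/2) (69/4) hxdef hydef hA⟩
  · -- d = 3 : take w = 1 + ζ = 1 ± √3, s = 2
    set w : ℚ⟮z⟯ := 1 + ζ with hwdef
    have hζ2 : ζ^2 = (3:ℚ⟮z⟯) := by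
      apply Subtype.coe_injective
      push_cast
      rw [hz]
      norm_cast
    have hw2 : w^2 = 2*w + 2 := by
      rw [hwdef]
      linear_combination hζ2
    have hw : w^2 = ((2:ℚ) : ℚ⟮z⟯) * w + 2 := by
      rw [hw2]
      push_cast
      ring
    have hirr : ∀ q : ℚ, (q : ℚ⟮z⟯) ≠ w := by
      intro q hq
      have hcoe : ((q : ℚ⟮z⟯) : ℝ) = (q : ℝ) := by push_cast; rfl
      have hqz : (q : ℝ) = 1 + z := by
        rw [← hcoe, hq, hwdef]
        push_cast
        norm_num
        exact hζ
      have hq2 : ((q:ℝ) - 1)^2 = 3 := by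
        rw [hqz, show (1:ℝ) + z - 1 = z from by ring, hz]
        norm_cast
      have h₁ : Real.sqrt 3 = |(q:ℝ) - 1| := by
        rw [← Real.sqrt_sq_eq_abs, hq2]
      have h3 : Irrational (Real.sqrt 3) := by
        have := (Nat.prime_three).irrational_sqrt
        simpa using this
      exact h3 (by rw [h₁]; exact ⟨|q - 1|, by push_cast; rfl⟩)
    set x : ℚ⟮z⟯ := ((31/4 : ℚ) : ℚ⟮z⟯) + ((0 : ℚ) : ℚ⟮z⟯) * w with hxdef
    set y : ℚ⟮z⟯ := ((-101/8 : ℚ) : ℚ⟮z⟯) + ((97/8 : ℚ) : ℚ⟮z⟯) * w with hydef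
    have heq : (X0_19 ℚ⟮z⟯).Equation x y := by
      rw [WeierstrassCurve.Affine.equation_iff]
      show y^2 + 0*x*y + 1*y = x^3 + 1*x^2 + (-9)*x + (-15)
      rw [hxdef, hydef]
      push_cast
      linear_combination ((97/8 : ℚ⟮z⟯))^2 * hw2
    have hwne : (2:ℚ⟮z⟯) * w + 1 ≠ 0 := by
      intro h0
      have : w = ((-1/2 : ℚ) : ℚ⟮z⟯) := by
        push_cast
        linear_combination (1/2 : ℚ⟮z⟯) * h0
      exact hirr (-1/2) this.symm
    have hns : (X0_19 ℚ⟮z⟯).Nonsingular x y := by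
      rw [WeierstrassCurve.Affine.nonsingular_iff]
      refine ⟨heq, Or.inr ?_⟩
      show y ≠ -y - 0*x - 1
      intro hcon
      apply hirr 1
      rw [hydef, hxdef] at hcon
      push_cast at hcon ⊢
      linear_combination (-(4/97 : ℚ⟮z⟯)) * hcon
    have hA : 1 < AA (31/4) 0 := by
      have hpn : padicNorm 2 (31/4 : ℚ) = 4 := by
        rw [show (31/4 : ℚ) = (31:ℚ)/(4:ℚ) by norm_num,
          show ((4:ℚ)) = (2:ℚ)*(2:ℚ) by norm_num, padicNorm.div, padicNorm.mul, pn_two,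
          show ((31:ℚ)) = ((31:ℤ):ℚ) by norm_num, pn_int_odd (by decide)]
        norm_num
      rw [AA_rat, hpn]
      norm_num
    exact ⟨WeierstrassCurve.Affine.Point.some _ _ hns,
      main_aux w 2 hw (Or.inr rfl) hirr hns (31/4) 0 (-101/8) (97/8) hxdef hydef hA⟩
end

section
/- Every unit of the ring of integers of Q(√6) is of the form ±(5 + 2√6)ⁿ for some integer n; that is, ε = 5 + 2√6 is a fundamental unit of Q(√6). -/
open IntermediateField NumberField Polynomial

private lemma irr6 {z : ℝ} (hz : z ^ 2 = 6) : Irrational z := by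
  apply irrational_nrt_of_notint_nrt 2 6 (by exact_mod_cast hz) _ two_pos
  rintro ⟨y, rfl⟩
  have h : y ^ 2 = 6 := by exact_mod_cast hz
  have h1 : y ≤ 2 := by nlinarith
  have h2 : -2 ≤ y := by nlinarith
  interval_cases y <;> omega

private lemma lin_indep {z : ℝ} (hzirr : Irrational z) {r s t : ℤ}
    (h : (r : ℝ) + s * z = t) : r = t ∧ s = 0 := by
  rcases eq_or_ne s 0 with rfl | hs
  · refine ⟨?_, rfl⟩
    have : (r : ℝ) = t := by simpa using h
    exact_mod_cast this
  · exfalso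
    refine hzirr ⟨((t : ℚ) - r) / s, ?_⟩
    have hs' : (s : ℝ) ≠ 0 := Int.cast_ne_zero.mpr hs
    push_cast
    field_simp
    linarith

private lemma rat_int_coeffs {p q : ℚ} {A N : ℤ} (hA : (A : ℚ) = 2 * p)
    (hN : (N : ℚ) = p ^ 2 - 6 * q ^ 2) : ∃ a b : ℤ, (a : ℚ) = p ∧ (b : ℚ) = q := by
  have h24 : ((A ^ 2 - 4 * N : ℤ) : ℚ) = 24 * q ^ 2 := by
    push_cast
    linear_combination ((A : ℚ) + 2 * p) * hA - 4 * hN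
  have hd : ((q.den : ℚ)) ≠ 0 := Nat.cast_ne_zero.mpr q.den_ne_zero
  have hq : (q.num : ℚ) = q * q.den := by
    rw [eq_comm, ← eq_div_iff hd]
    exact (Rat.num_div_den q).symm
  obtain ⟨B, hB⟩ : ∃ B : ℤ, (B : ℚ) = 2 * q := by
    have hden : ((A ^ 2 - 4 * N) * (q.den : ℤ) ^ 2 : ℤ) = 24 * q.num ^ 2 := by
      have : ((A ^ 2 - 4 * N : ℤ) : ℚ) * (q.den : ℚ) ^ 2 = 24 * (q.num : ℚ) ^ 2 := by
        rw [h24, hq]; ring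
      exact_mod_cast this
    have hdvd : (q.den : ℤ) ^ 2 ∣ 24 * q.num ^ 2 := ⟨A ^ 2 - 4 * N, by linarith [hden]⟩
    have hdvd' : q.den ^ 2 ∣ 24 * q.num.natAbs ^ 2 := by
      have := Int.natAbs_dvd_natAbs.mpr hdvd
      simpa [Int.natAbs_mul, Int.natAbs_pow] using this
    have hcop : Nat.Coprime (q.den ^ 2) (q.num.natAbs ^ 2) := q.reduced.symm.pow 2 2
    have h24' : q.den ^ 2 ∣ 24 := hcop.dvd_of_dvd_mul_right hdvd'
    have hle24 : q.den ^ 2 ≤ 24 := Nat.le_of_dvd (by norm_num) h24'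
    have h4 : q.den ≤ 4 := by nlinarith
    have hd1' : 1 ≤ q.den := q.pos
    have hcase : q.den = 1 ∨ q.den = 2 := by
      rcases Nat.lt_or_ge q.den 3 with h | h
      · omega
      · exfalso
        have h3 : q.den = 3 ∨ q.den = 4 := by omega
        rcases h3 with h3 | h3 <;> rw [h3] at h24' <;> norm_num at h24'
    rcases hcase with hd1 | hd2
    · refine ⟨2 * q.num, ?_⟩
      push_cast
      rw [hq, hd1]
      push_cast
      ring
    · refine ⟨q.num, ?_⟩
      rw [hq, hd2]
      push_cast
      ring
  have hkey : A ^ 2 - 6 * B ^ 2 = 4 * N := by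
    have : ((A ^ 2 - 6 * B ^ 2 : ℤ) : ℚ) = ((4 * N : ℤ) : ℚ) := by
      push_cast
      linear_combination ((A : ℚ) + 2 * p) * hA - 6 * ((B : ℚ) + 2 * q) * hB - 4 * hN
    exact_mod_cast this
  rcases Int.even_or_odd A with ⟨k, hk⟩ | ⟨k, hk⟩
  · rcases Int.even_or_odd B with ⟨l, hl⟩ | ⟨l, hl⟩
    · refine ⟨k, l, ?_, ?_⟩
      · have h2 : ((2 : ℚ)) * k = 2 * p := by
          rw [← hA, hk]; push_cast; ring
        linarith
      · have h2 : ((2 : ℚ)) * l = 2 * q := by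
          rw [← hB, hl]; push_cast; ring
        linarith
    · exfalso
      subst hk hl
      have h6 : 4 * (k ^ 2 - 6 * l ^ 2 - 6 * l - N) = 6 := by linear_combination hkey
      omega
  · exfalso
    rcases Int.even_or_odd B with ⟨l, hl⟩ | ⟨l, hl⟩
    · subst hk hl
      have h6 : 4 * (k ^ 2 + k - 6 * l ^ 2 - N) = -1 := by linear_combination hkey
      omega
    · subst hk hl
      have h6 : 4 * (k ^ 2 + k - 6 * l ^ 2 - 6 * l - N) = 5 := by linear_combination hkey
      omega

private lemma minpoly_quad {x : ℝ} (hint : IsIntegral ℚ x) (hirr : Irrational x)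
    {p : ℚ[X]} (hm : p.Monic) (hdeg : p.natDegree = 2) (hroot : aeval x p = 0) :
    minpoly ℚ x = p := by
  have hdvd : minpoly ℚ x ∣ p := minpoly.dvd ℚ x hroot
  have h2 : 2 ≤ (minpoly ℚ x).natDegree := by
    rw [minpoly.two_le_natDegree_iff hint]
    rintro ⟨r, hr⟩
    exact hirr ⟨r, ((eq_ratCast (algebraMap ℚ ℝ) r).symm.trans hr)⟩
  exact eq_of_monic_of_associated (minpoly.monic hint) hm
    (associated_of_dvd_of_natDegree_le hdvd hm.ne_zero (by rw [hdeg]; exact h2))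

private lemma int_coeffs {z x : ℝ} (hz : z ^ 2 = 6) (hzirr : Irrational z)
    (hint : IsIntegral ℤ x) {p q : ℚ} (hx : x = p + q * z) :
    ∃ a b : ℤ, (a : ℚ) = p ∧ (b : ℚ) = q := by
  rcases eq_or_ne q 0 with rfl | hq
  · have hxp : x = (p : ℝ) := by rw [hx]; push_cast; ring
    have hint' : IsIntegral ℤ ((p : ℝ)) := hxp ▸ hint
    have hint'' : IsIntegral ℤ p := by
      rw [show ((p : ℝ)) = algebraMap ℚ ℝ p from (eq_ratCast (algebraMap ℚ ℝ) p).symm] at hint'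
      exact (isIntegral_algebraMap_iff (algebraMap ℚ ℝ).injective).mp hint'
    obtain ⟨a, ha⟩ := IsIntegrallyClosed.isIntegral_iff.mp hint''
    exact ⟨a, 0, by exact_mod_cast ha, by norm_num⟩
  · have hQint : IsIntegral ℚ x := hint.tower_top
    have hxirr : Irrational x := by
      rw [hx]
      exact (hzirr.ratCast_mul hq).ratCast_add p
    set P : ℚ[X] := X ^ 2 - C (2 * p) * X + C (p ^ 2 - 6 * q ^ 2) with hP
    have hroot : aeval x P = 0 := by
      rw [hP]
      simp only [map_add, map_sub, map_mul, aeval_X_pow, aeval_X, aeval_C, hx, eq_ratCast]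
      push_cast
      linear_combination (q : ℝ) ^ 2 * hz
    have hmon : P.Monic := by rw [hP]; monicity!
    have hdeg : P.natDegree = 2 := by rw [hP]; compute_degree!
    have hmin := minpoly_quad hQint hxirr hmon hdeg hroot
    have hmap := minpoly.isIntegrallyClosed_eq_field_fractions ℚ ℝ (s := x) hint
    rw [Algebra.algebraMap_self_apply, hmin] at hmap
    have hPc1 : P.coeff 1 = -(2 * p) := by
      simp only [hP, coeff_add, coeff_sub, coeff_X_pow, coeff_C_mul, coeff_X_one, coeff_C]
      norm_num
    have hPc0 : P.coeff 0 = p ^ 2 - 6 * q ^ 2 := by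
      simp only [hP, coeff_add, coeff_sub, coeff_X_pow, coeff_C_mul, coeff_X_zero, coeff_C]
      norm_num
    have hc1 : ((minpoly ℤ x).coeff 1 : ℚ) = -(2 * p) := by
      have h := congrArg (fun f => Polynomial.coeff f 1) hmap
      simp only [coeff_map, eq_intCast, hPc1] at h
      exact h.symm
    have hc0 : ((minpoly ℤ x).coeff 0 : ℚ) = p ^ 2 - 6 * q ^ 2 := by
      have h := congrArg (fun f => Polynomial.coeff f 0) hmap
      simp only [coeff_map, eq_intCast, hPc0] at h
      exact h.symm
    exact rat_int_coeffs (A := -((minpoly ℤ x).coeff 1))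
      (by push_cast; rw [hc1]; ring) hc0

private lemma rep6 {z : ℝ} (hz : z ^ 2 = 6) (y : ℚ⟮z⟯) :
    ∃ p q : ℚ, (algebraMap ℚ⟮z⟯ ℝ) y = p + q * z := by
  have hzi : IsIntegral ℚ z :=
    ⟨X ^ 2 - C 6, monic_X_pow_sub_C _ two_ne_zero, by simp [hz]⟩
  obtain ⟨f, hf, hy⟩ := (IntermediateField.adjoin.powerBasis hzi).exists_eq_aeval y
  rw [IntermediateField.adjoin.powerBasis_dim] at hf
  have hminz : minpoly ℚ z = X ^ 2 - C 6 := by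
    refine minpoly_quad hzi (irr6 hz) (monic_X_pow_sub_C _ two_ne_zero) ?_ (by simp [hz])
    simp [natDegree_X_pow_sub_C]
  rw [hminz, natDegree_X_pow_sub_C] at hf
  have hf1 : f.natDegree ≤ 1 := by omega
  refine ⟨f.coeff 0, f.coeff 1, ?_⟩
  have hgen : algebraMap ℚ⟮z⟯ ℝ (IntermediateField.adjoin.powerBasis hzi).gen = z := by
    rw [IntermediateField.adjoin.powerBasis_gen]
    rfl
  have h1 : algebraMap ℚ⟮z⟯ ℝ y = Polynomial.aeval z f := by
    have h2 := Polynomial.aeval_algHom_apply (IsScalarTower.toAlgHom ℚ ℚ⟮z⟯ ℝ)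
      (IntermediateField.adjoin.powerBasis hzi).gen f
    simp only [IsScalarTower.coe_toAlgHom'] at h2
    rw [hy]; exact h2.symm.trans (by rw [hgen])
  rw [h1]
  conv_lhs => rw [Polynomial.eq_X_add_C_of_natDegree_le_one hf1]
  simp only [map_add, map_mul, aeval_X, aeval_C]
  rw [eq_ratCast (algebraMap ℚ ℝ), eq_ratCast (algebraMap ℚ ℝ)]
  ring

/-- Every unit of the ring of integers of `ℚ(√6)` is of the form `±(5 + 2√6)ⁿ` for some
integer `n`; that is, `ε = 5 + 2√6` is a fundamental unit of `ℚ(√6)`. -/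
theorem fundamentalUnit_sqrt6 (z : ℝ) (hz : z ^ 2 = 6) :
    ∀ u : (𝓞 ℚ⟮z⟯)ˣ, ∃ n : ℤ,
      ((u : 𝓞 ℚ⟮z⟯) : ℚ⟮z⟯) = (5 + 2 * AdjoinSimple.gen ℚ z) ^ n ∨
      ((u : 𝓞 ℚ⟮z⟯) : ℚ⟮z⟯) = -(5 + 2 * AdjoinSimple.gen ℚ z) ^ n := by
  intro u
  have hzirr := irr6 hz
  -- integer coefficients for integral elements
  have main : ∀ v : 𝓞 ℚ⟮z⟯, ∃ a b : ℤ,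
      (algebraMap ℚ⟮z⟯ ℝ) (v : ℚ⟮z⟯) = a + b * z := by
    intro v
    obtain ⟨p, q, hpq⟩ := rep6 hz (v : ℚ⟮z⟯)
    have hvint : IsIntegral ℤ ((algebraMap ℚ⟮z⟯ ℝ) (v : ℚ⟮z⟯)) :=
      (RingOfIntegers.isIntegral_coe v).map (IsScalarTower.toAlgHom ℤ ℚ⟮z⟯ ℝ)
    obtain ⟨a, b, ha, hb⟩ := int_coeffs hz hzirr hvint hpq
    exact ⟨a, b, by rw [hpq, ← ha, ← hb]; push_cast; ring⟩
  obtain ⟨a, b, hab⟩ := main u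
  obtain ⟨c, d, hcd⟩ := main ((u⁻¹ : (𝓞 ℚ⟮z⟯)ˣ) : 𝓞 ℚ⟮z⟯)
  have hmul : ((a : ℝ) + b * z) * (c + d * z) = 1 := by
    rw [← hab, ← hcd, ← map_mul]
    have h1 : ((u : 𝓞 ℚ⟮z⟯) : ℚ⟮z⟯) * (((u⁻¹ : (𝓞 ℚ⟮z⟯)ˣ) : 𝓞 ℚ⟮z⟯) : ℚ⟮z⟯) = 1 := by
      exact_mod_cast congrArg (fun w : 𝓞 ℚ⟮z⟯ => (w : ℚ⟮z⟯)) u.mul_inv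
    rw [h1, map_one]
  have hexp : ((a * c + 6 * (b * d) : ℤ) : ℝ) + ((a * d + b * c : ℤ) : ℝ) * z = ((1 : ℤ) : ℝ) := by
    push_cast
    linear_combination hmul - (b : ℝ) * d * hz
  obtain ⟨h1, h2⟩ := lin_indep hzirr hexp
  have hnorm : (a ^ 2 - 6 * b ^ 2) * (c ^ 2 - 6 * d ^ 2) = 1 := by
    linear_combination (a * c + 6 * (b * d) + 1) * h1 - 6 * (a * d + b * c) * h2
  have hsol : a ^ 2 - 6 * b ^ 2 = 1 := by
    rcases Int.eq_one_or_neg_one_of_mul_eq_one' hnorm with ⟨h, _⟩ | ⟨h, _⟩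
    · exact h
    · exfalso
      have h3 : ((a : ZMod 3)) ^ 2 - 6 * ((b : ZMod 3)) ^ 2 = -1 := by
        have h' : a ^ 2 - 6 * b ^ 2 = -1 := h
        have := congrArg (Int.cast : ℤ → ZMod 3) h'
        push_cast at this
        linear_combination this
      exact (by decide : ∀ r s : ZMod 3, r ^ 2 - 6 * s ^ 2 ≠ -1) _ _ h3
  -- Pell part
  have hfund : Pell.IsFundamental (Pell.Solution₁.mk 5 2 (by norm_num) : Pell.Solution₁ 6) := by
    refine ⟨by norm_num, by norm_num, ?_⟩
    intro v hv
    rw [Pell.Solution₁.x_mk]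
    by_contra hle
    push_neg at hle
    have hprop := v.prop_x
    have hy := Pell.Solution₁.y_ne_zero_of_one_lt_x hv
    set Y := v.y ^ 2 with hY
    have hy2 : 1 ≤ Y := by
      have : 0 < Y := by positivity
      omega
    have hx : v.x = 2 ∨ v.x = 3 ∨ v.x = 4 := by omega
    rcases hx with h | h | h <;> rw [h] at hprop <;> norm_num at hprop <;> omega
  obtain ⟨n, hcase⟩ := hfund.eq_zpow_or_neg_zpow (Pell.Solution₁.mk a b hsol)
  -- map to ℝ
  have hzz : z * z = ((6 : ℤ) : ℝ) := by push_cast; nlinarith [hz]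
  set φ : ℤ√6 →+* ℝ := Zsqrtd.lift ⟨z, hzz⟩ with hφ
  set Φ : Pell.Solution₁ 6 →* ℝˣ := (Units.map φ.toMonoidHom).comp Unitary.toUnits with hΦ
  have hval : ∀ s : Pell.Solution₁ 6, ((Φ s : ℝˣ) : ℝ) = (s.x : ℝ) + s.y * z := by
    intro s
    rfl
  have hvfund : ((Φ (Pell.Solution₁.mk 5 2 (by norm_num)) : ℝˣ) : ℝ) = 5 + 2 * z := by
    rw [hval]
    push_cast [Pell.Solution₁.x_mk, Pell.Solution₁.y_mk]
    ring
  have hvsol : ((Φ (Pell.Solution₁.mk a b hsol) : ℝˣ) : ℝ) =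
      (algebraMap ℚ⟮z⟯ ℝ) ((u : 𝓞 ℚ⟮z⟯) : ℚ⟮z⟯) := by
    rw [hval, hab]
    norm_num
  have hbase : (algebraMap ℚ⟮z⟯ ℝ) (5 + 2 * AdjoinSimple.gen ℚ z) = 5 + 2 * z := by
    have hg : (algebraMap ℚ⟮z⟯ ℝ) (AdjoinSimple.gen ℚ z) = z := rfl
    rw [map_add, map_mul, hg, map_ofNat, map_ofNat]
  have hinj : Function.Injective (algebraMap ℚ⟮z⟯ ℝ) := (algebraMap ℚ⟮z⟯ ℝ).injective
  refine ⟨n, ?_⟩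
  rcases hcase with hc | hc
  · left
    apply hinj
    rw [map_zpow₀, hbase, ← hvsol, hc, map_zpow, Units.val_zpow_eq_zpow_val, hvfund]
  · right
    apply hinj
    rw [map_neg, map_zpow₀, hbase, ← hvsol, hc]
    have hneg : ((Φ (-(Pell.Solution₁.mk 5 2 (by norm_num)) ^ n) : ℝˣ) : ℝ) =
        -((Φ ((Pell.Solution₁.mk 5 2 (by norm_num)) ^ n) : ℝˣ) : ℝ) := by
      rw [hval, hval, Pell.Solution₁.x_neg, Pell.Solution₁.y_neg]
      push_cast
      ring
    rw [hneg, map_zpow, Units.val_zpow_eq_zpow_val, hvfund]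
end

section
/- Every unit of the ring of integers of Q(√318049), where 318049 = 47 · 67 · 101, is of the form ±(13535 + 24√318049)ⁿ for some integer n; that is, ε = 13535 + 24√318049 is a fundamental unit of Q(√318049). -/
open IntermediateField NumberField Polynomial
set_option maxHeartbeats 1000000

/- Auxiliary arithmetic lemmas -/

theorem FU.not_sq {N a : ℕ} (h1 : a*a < N) (h2 : N < (a+1)*(a+1)) (x : ℕ) : x*x ≠ N := by
  rcases le_or_gt x a with h|h
  · nlinarith [Nat.mul_le_mul h h]
  · nlinarith [Nat.mul_le_mul h h]

theorem FU.rat_no_sqrt (r : ℚ) : r^2 ≠ 318049 := by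
  intro h
  have hint : IsIntegral ℤ r := ⟨X^2 - C 318049, monic_X_pow_sub_C _ two_ne_zero, by
    simp [h]⟩
  obtain ⟨n, rfl⟩ := IsIntegrallyClosed.isIntegral_iff.mp hint
  have h' : (n:ℚ)^2 = 318049 := by simpa using h
  have hn : n^2 = 318049 := by exact_mod_cast h'
  have h1 : (n.natAbs * n.natAbs : ℤ) = 318049 := by
    rw [Int.natAbs_mul_self']; nlinarith [hn]
  have hXX : n.natAbs * n.natAbs = 318049 := by exact_mod_cast h1
  exact absurd hXX (FU.not_sq (a := 563) (by norm_num) (by norm_num) _)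

theorem FU.sqf : Squarefree (318049:ℕ) := by
  have h : (318049:ℕ) = 47*(67*101) := by norm_num
  rw [h]
  exact (Nat.squarefree_mul (by decide)).2 ⟨(by norm_num : Nat.Prime 47).squarefree,
    (Nat.squarefree_mul (by decide)).2 ⟨(by norm_num : Nat.Prime 67).squarefree,
      (by norm_num : Nat.Prime 101).squarefree⟩⟩

theorem FU.den_lemma (r : ℚ) (m : ℤ) (h : 318049 * r^2 = (m:ℚ)) : ∃ t : ℤ, (t:ℚ) = r := by
  refine ⟨r.num, ?_⟩
  suffices hd : r.den = 1 by
    conv_rhs => rw [← Rat.num_div_den r]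
    rw [hd]; simp
  have hr : (r.num : ℚ) = r * r.den := (Rat.mul_den_eq_num r).symm
  have hmul : (318049 * r.num^2 : ℚ) = (m * (r.den:ℤ)^2 : ℤ) := by
    push_cast
    rw [hr]
    nlinarith [h]
  have hz : (318049 * r.num^2 : ℤ) = m * (r.den:ℤ)^2 := by exact_mod_cast hmul
  have hdvd : (r.den:ℤ)^2 ∣ 318049 * r.num^2 := ⟨m, by linarith [hz]⟩
  have hdvdn : (r.den)^2 ∣ 318049 * r.num.natAbs^2 := by
    have := Int.natAbs_dvd_natAbs.mpr hdvd
    simpa [Int.natAbs_mul, Int.natAbs_pow] using this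
  have hcop : Nat.Coprime (r.den^2) (r.num.natAbs^2) :=
    Nat.Coprime.pow 2 2 (Nat.coprime_comm.mp r.reduced)
  have hdv : (r.den)^2 ∣ 318049 := Nat.Coprime.dvd_of_dvd_mul_right hcop hdvdn
  exact Nat.isUnit_iff.mp (FU.sqf r.den (by rwa [← pow_two]))

theorem FU.int_pell (s t A : ℤ) (hA : A = 1 ∨ A = -1) (h : s^2 - 318049*t^2 = 4*A) :
    A = 1 ∧ 2 ∣ s ∧ 2 ∣ t := by
  rcases hA with rfl | rfl
  · refine ⟨rfl, ?_, ?_⟩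
    · have h8 := congrArg (Int.cast : ℤ → ZMod 8) h
      push_cast at h8
      have key : ∀ x y : ZMod 8, x^2 - 318049*y^2 = 4*1 →
          (ZMod.castHom (by norm_num : 2 ∣ 8) (ZMod 2) x = 0) := by decide
      have := key _ _ h8
      rw [map_intCast] at this
      exact (ZMod.intCast_zmod_eq_zero_iff_dvd s 2).mp this
    · have h8 := congrArg (Int.cast : ℤ → ZMod 8) h
      push_cast at h8
      have key : ∀ x y : ZMod 8, x^2 - 318049*y^2 = 4*1 →
          (ZMod.castHom (by norm_num : 2 ∣ 8) (ZMod 2) y = 0) := by decide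
      have := key _ _ h8
      rw [map_intCast] at this
      exact (ZMod.intCast_zmod_eq_zero_iff_dvd t 2).mp this
  · exfalso
    have h47 := congrArg (Int.cast : ℤ → ZMod 47) h
    push_cast at h47
    have key : ∀ x y : ZMod 47, x^2 - 318049*y^2 ≠ 4*(-1) := by decide
    exact key _ _ h47

/- Field-theoretic lemmas about `ℚ⟮z⟯` -/

section FUsec

variable (z : ℝ) (hz : z ^ 2 = 318049)
include hz

theorem FU.z_int : IsIntegral ℚ z :=
  ⟨X^2 - C 318049, monic_X_pow_sub_C _ two_ne_zero, by simp [hz]⟩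

theorem FU.gen_sq : (AdjoinSimple.gen ℚ z)^2 = 318049 := by
  have h := AdjoinSimple.algebraMap_gen ℚ z
  apply (algebraMap ℚ⟮z⟯ ℝ).injective
  rw [map_pow, h, hz, map_ofNat]

theorem FU.gen_irrat (r : ℚ) : algebraMap ℚ ℚ⟮z⟯ r ≠ AdjoinSimple.gen ℚ z := by
  intro h
  have h2 := congrArg (algebraMap ℚ⟮z⟯ ℝ) h
  rw [AdjoinSimple.algebraMap_gen, ← IsScalarTower.algebraMap_apply] at h2
  have : (r:ℝ)^2 = 318049 := by
    rw [show ((r:ℝ)) = z from h2, hz]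
  exact FU.rat_no_sqrt r (by exact_mod_cast this)

theorem FU.coords_unique {p q p' q' : ℚ}
    (h : algebraMap ℚ ℚ⟮z⟯ p + algebraMap ℚ ℚ⟮z⟯ q * AdjoinSimple.gen ℚ z
       = algebraMap ℚ ℚ⟮z⟯ p' + algebraMap ℚ ℚ⟮z⟯ q' * AdjoinSimple.gen ℚ z) :
    p = p' ∧ q = q' := by
  by_cases hq : q = q'
  · subst hq
    refine ⟨?_, rfl⟩
    have := add_right_cancel h
    exact (algebraMap ℚ ℚ⟮z⟯).injective this
  · exfalso
    apply FU.gen_irrat z hz ((p - p')/(q' - q))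
    have hqq : (q' - q : ℚ) ≠ 0 := sub_ne_zero.mpr (Ne.symm hq)
    have hqq' : algebraMap ℚ ℚ⟮z⟯ (q' - q) ≠ 0 := by
      simpa using fun hc => hqq ((algebraMap ℚ ℚ⟮z⟯).injective (by simpa using hc))
    rw [map_div₀, eq_comm, eq_div_iff hqq']
    rw [map_sub, map_sub]
    linear_combination -h

theorem FU.minpoly_z : minpoly ℚ z = X^2 - C 318049 := by
  refine (minpoly.eq_of_irreducible_of_monic ?_ ?_ (monic_X_pow_sub_C _ two_ne_zero)).symm
  · exact X_pow_sub_C_irreducible_of_prime Nat.prime_two (fun b => FU.rat_no_sqrt b)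
  · simp [hz]

theorem FU.coords_exist (α : ℚ⟮z⟯) : ∃ p q : ℚ,
    α = algebraMap ℚ ℚ⟮z⟯ p + algebraMap ℚ ℚ⟮z⟯ q * AdjoinSimple.gen ℚ z := by
  obtain ⟨f, hdeg, hf⟩ := (IntermediateField.adjoin.powerBasis (FU.z_int z hz)).exists_eq_aeval α
  rw [IntermediateField.adjoin.powerBasis_dim, FU.minpoly_z z hz] at hdeg
  have hdeg2 : f.natDegree ≤ 1 := by
    have : (X^2 - C (318049:ℚ)).natDegree = 2 := by
      simpa using natDegree_X_pow_sub_C (n := 2) (a := (318049:ℚ))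
    omega
  refine ⟨f.coeff 0, f.coeff 1, ?_⟩
  rw [hf, IntermediateField.adjoin.powerBasis_gen]
  conv_lhs => rw [Polynomial.eq_X_add_C_of_natDegree_le_one hdeg2]
  rw [map_add, map_mul, aeval_C, aeval_C, aeval_X]
  rw [add_comm]
  rfl

theorem FU.integral_coords (α : ℚ⟮z⟯) (hα : IsIntegral ℤ α) (p q : ℚ) (hq : q ≠ 0)
    (hc : α = algebraMap ℚ ℚ⟮z⟯ p + algebraMap ℚ ℚ⟮z⟯ q * AdjoinSimple.gen ℚ z) :
    (∃ s : ℤ, (s:ℚ) = 2*p) ∧ (∃ N : ℤ, (N:ℚ) = p^2 - 318049*q^2) := by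
  set g : ℚ[X] := X^2 - C (2*p) * X + C (p^2 - 318049*q^2) with hg
  have hmonic : g.Monic := by unfold g; monicity!
  have hroot : (aeval α) g = 0 := by
    rw [hg, hc]
    simp only [map_add, map_sub, map_mul, map_pow, map_ofNat, aeval_X, aeval_C]
    linear_combination (algebraMap ℚ ℚ⟮z⟯ q)^2 * FU.gen_sq z hz
  have hgdeg : g.degree = 2 := by unfold g; compute_degree!
  have hmin : g = minpoly ℚ α := by
    refine minpoly.unique ℚ α hmonic hroot ?_
    intro k hk hk0
    rw [hgdeg, degree_eq_natDegree hk.ne_zero]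
    suffices h2 : 2 ≤ k.natDegree by exact_mod_cast h2
    by_contra hlt
    push_neg at hlt
    have hk1 : k.natDegree ≤ 1 := by omega
    have hkeq := Polynomial.eq_X_add_C_of_natDegree_le_one hk1
    rcases Nat.lt_or_ge k.natDegree 1 with h0 | h1
    · -- degree 0 : k = C (k.coeff 0), monic means k = 1
      have hc1 : k.coeff 1 = 0 := Polynomial.coeff_eq_zero_of_natDegree_lt (by omega)
      have hc0 : k.coeff 0 = 1 := by
        have := hk.coeff_natDegree
        rwa [Nat.lt_one_iff.mp h0] at this
      rw [hkeq, hc1, hc0] at hk0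
      simp at hk0
    · -- degree 1 : α is rational, contradicting q ≠ 0
      have hd1 : k.natDegree = 1 := le_antisymm hk1 h1
      have hc1 : k.coeff 1 = 1 := by
        have := hk.coeff_natDegree
        rwa [hd1] at this
      rw [hkeq, hc1] at hk0
      simp only [map_add, map_mul, map_one, aeval_X, aeval_C, one_mul] at hk0
      have hα' : α = algebraMap ℚ ℚ⟮z⟯ (-(k.coeff 0)) + algebraMap ℚ ℚ⟮z⟯ 0 * AdjoinSimple.gen ℚ z := by
        rw [map_zero, zero_mul, add_zero, map_neg]
        linarith [hk0]
      rw [hc] at hα'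
      exact hq (FU.coords_unique z hz hα').2
  have hmap : minpoly ℚ α = (minpoly ℤ α).map (algebraMap ℤ ℚ) :=
    minpoly.isIntegrallyClosed_eq_field_fractions' ℚ hα
  have hgm : g = (minpoly ℤ α).map (algebraMap ℤ ℚ) := hmin.trans hmap
  constructor
  · refine ⟨-((minpoly ℤ α).coeff 1), ?_⟩
    have := congrArg (fun f : ℚ[X] => f.coeff 1) hgm
    simp only [hg, coeff_map, coeff_add, coeff_sub, coeff_C_mul, coeff_X_pow, coeff_C,
      coeff_X_one] at this
    push_cast
    norm_num at this ⊢
    linarith [this]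
  · refine ⟨(minpoly ℤ α).coeff 0, ?_⟩
    have := congrArg (fun f : ℚ[X] => f.coeff 0) hgm
    simp only [hg, coeff_map, coeff_add, coeff_sub, coeff_C_mul, coeff_X_pow, coeff_C,
      coeff_X_zero] at this
    push_cast
    norm_num at this ⊢
    linarith [this]

/-- The monoid homomorphism from Pell solutions to units of `ℚ⟮z⟯`. -/
noncomputable def FU.phi : Pell.Solution₁ 318049 →* (ℚ⟮z⟯)ˣ where
  toFun a := Units.mkOfMulEqOne
    ((a.x : ℚ⟮z⟯) + (a.y : ℚ⟮z⟯) * AdjoinSimple.gen ℚ z)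
    ((a.x : ℚ⟮z⟯) - (a.y : ℚ⟮z⟯) * AdjoinSimple.gen ℚ z)
    (by
      have hp : ((a.x : ℚ⟮z⟯))^2 - 318049*((a.y : ℚ⟮z⟯))^2 = 1 := by
        exact_mod_cast congrArg (fun m : ℤ => (m : ℚ⟮z⟯)) a.prop
      linear_combination hp - ((a.y : ℚ⟮z⟯))^2 * FU.gen_sq z hz)
  map_one' := by
    apply Units.ext
    simp [Pell.Solution₁.x_one, Pell.Solution₁.y_one]
  map_mul' a b := by
    apply Units.ext
    simp only [Units.val_mkOfMulEqOne, Units.val_mul, Pell.Solution₁.x_mul, Pell.Solution₁.y_mul]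
    push_cast
    linear_combination (-(a.y : ℚ⟮z⟯) * (b.y : ℚ⟮z⟯)) * FU.gen_sq z hz

theorem FU.phi_val (a : Pell.Solution₁ 318049) :
    ((FU.phi z hz a : (ℚ⟮z⟯)ˣ) : ℚ⟮z⟯)
      = (a.x : ℚ⟮z⟯) + (a.y : ℚ⟮z⟯) * AdjoinSimple.gen ℚ z := rfl

omit hz in
def FU.a1 : Pell.Solution₁ 318049 := Pell.Solution₁.mk 13535 24 (by norm_num)

omit hz in
theorem FU.a1_fund : Pell.IsFundamental FU.a1 := by
  refine ⟨by norm_num [FU.a1, Pell.Solution₁.x_mk], by norm_num [FU.a1, Pell.Solution₁.y_mk], ?_⟩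
  intro b hb
  rw [FU.a1, Pell.Solution₁.x_mk]
  by_contra hlt
  push_neg at hlt
  have hprop := b.prop
  have hy0 : b.y ≠ 0 := Pell.Solution₁.y_ne_zero_of_one_lt_x hb
  set Y := b.y.natAbs with hYdef
  clear_value Y
  have hYpos : 1 ≤ Y := by
    rw [hYdef]
    exact Int.natAbs_pos.mpr hy0
  have hYcast : ((Y:ℤ))^2 = b.y^2 := by rw [hYdef, Int.natCast_natAbs, sq_abs]
  have hx2 : b.x^2 = 1 + 318049 * (Y:ℤ)^2 := by rw [hYcast]; linarith [hprop]
  have hY575 : ((Y:ℤ))^2 ≤ 575 := by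
    nlinarith [hx2, hb, hlt, mul_nonneg (by linarith : (0:ℤ) ≤ 13534 - b.x)
      (by linarith : (0:ℤ) ≤ b.x - 2)]
  have hY23 : Y ≤ 23 := by
    by_contra hY24
    push_neg at hY24
    have : (24:ℤ) ≤ (Y:ℤ) := by exact_mod_cast hY24
    nlinarith [hY575]
  set X := b.x.natAbs with hXdef
  have hXX : X * X = 1 + 318049 * (Y * Y) := by
    have hx : ((X:ℤ)) * X = 1 + 318049*((Y:ℤ)*(Y:ℤ)) := by
      rw [hXdef, Int.natAbs_mul_self']
      nlinarith [hx2]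
    exact_mod_cast hx
  clear_value X
  interval_cases Y
  · exact absurd hXX (FU.not_sq (a := 563) (by norm_num) (by norm_num) X)
  · exact absurd hXX (FU.not_sq (a := 1127) (by norm_num) (by norm_num) X)
  · exact absurd hXX (FU.not_sq (a := 1691) (by norm_num) (by norm_num) X)
  · exact absurd hXX (FU.not_sq (a := 2255) (by norm_num) (by norm_num) X)
  · exact absurd hXX (FU.not_sq (a := 2819) (by norm_num) (by norm_num) X)
  · exact absurd hXX (FU.not_sq (a := 3383) (by norm_num) (by norm_num) X)
  · exact absurd hXX (FU.not_sq (a := 3947) (by norm_num) (by norm_num) X)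
  · exact absurd hXX (FU.not_sq (a := 4511) (by norm_num) (by norm_num) X)
  · exact absurd hXX (FU.not_sq (a := 5075) (by norm_num) (by norm_num) X)
  · exact absurd hXX (FU.not_sq (a := 5639) (by norm_num) (by norm_num) X)
  · exact absurd hXX (FU.not_sq (a := 6203) (by norm_num) (by norm_num) X)
  · exact absurd hXX (FU.not_sq (a := 6767) (by norm_num) (by norm_num) X)
  · exact absurd hXX (FU.not_sq (a := 7331) (by norm_num) (by norm_num) X)
  · exact absurd hXX (FU.not_sq (a := 7895) (by norm_num) (by norm_num) X)
  · exact absurd hXX (FU.not_sq (a := 8459) (by norm_num) (by norm_num) X)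
  · exact absurd hXX (FU.not_sq (a := 9023) (by norm_num) (by norm_num) X)
  · exact absurd hXX (FU.not_sq (a := 9587) (by norm_num) (by norm_num) X)
  · exact absurd hXX (FU.not_sq (a := 10151) (by norm_num) (by norm_num) X)
  · exact absurd hXX (FU.not_sq (a := 10715) (by norm_num) (by norm_num) X)
  · exact absurd hXX (FU.not_sq (a := 11279) (by norm_num) (by norm_num) X)
  · exact absurd hXX (FU.not_sq (a := 11843) (by norm_num) (by norm_num) X)
  · exact absurd hXX (FU.not_sq (a := 12407) (by norm_num) (by norm_num) X)
  · exact absurd hXX (FU.not_sq (a := 12971) (by norm_num) (by norm_num) X)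

theorem FU.phi_neg (b : Pell.Solution₁ 318049) : FU.phi z hz (-b) = -(FU.phi z hz b) := by
  apply Units.ext
  rw [Units.val_neg, FU.phi_val, FU.phi_val, Pell.Solution₁.x_neg, Pell.Solution₁.y_neg]
  push_cast
  ring

end FUsec

/-- Every unit of the ring of integers of `ℚ(√318049)`, where `318049 = 47 · 67 · 101`, is of
the form `±(13535 + 24√318049)ⁿ` for some integer `n`; that is, `ε = 13535 + 24√318049` is a
fundamental unit of `ℚ(√318049)`. -/
theorem fundamentalUnit_sqrt318049 (z : ℝ) (hz : z ^ 2 = 318049) :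
    ∀ u : (𝓞 ℚ⟮z⟯)ˣ, ∃ n : ℤ,
      ((u : 𝓞 ℚ⟮z⟯) : ℚ⟮z⟯) = (13535 + 24 * AdjoinSimple.gen ℚ z) ^ n ∨
      ((u : 𝓞 ℚ⟮z⟯) : ℚ⟮z⟯) = -(13535 + 24 * AdjoinSimple.gen ℚ z) ^ n := by
  intro u
  obtain ⟨p, q, hpq⟩ := FU.coords_exist z hz ((u : 𝓞 ℚ⟮z⟯) : ℚ⟮z⟯)
  obtain ⟨r, s, hrs⟩ := FU.coords_exist z hz (((u⁻¹ : (𝓞 ℚ⟮z⟯)ˣ) : 𝓞 ℚ⟮z⟯) : ℚ⟮z⟯)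
  have hprod : ((u : 𝓞 ℚ⟮z⟯) : ℚ⟮z⟯) * (((u⁻¹ : (𝓞 ℚ⟮z⟯)ˣ) : 𝓞 ℚ⟮z⟯) : ℚ⟮z⟯) = 1 := by
    rw [NumberField.RingOfIntegers.coe_eq_algebraMap, NumberField.RingOfIntegers.coe_eq_algebraMap,
      ← map_mul, Units.mul_inv, map_one]
  have hrel := hprod
  rw [hpq, hrs] at hrel
  have hexp : algebraMap ℚ ℚ⟮z⟯ (p*r + 318049*(q*s)) + algebraMap ℚ ℚ⟮z⟯ (p*s + q*r) * AdjoinSimple.gen ℚ z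
      = algebraMap ℚ ℚ⟮z⟯ 1 + algebraMap ℚ ℚ⟮z⟯ 0 * AdjoinSimple.gen ℚ z := by
    simp only [map_zero, zero_mul, add_zero, map_one, map_add, map_mul, map_ofNat]
    linear_combination hrel - (algebraMap ℚ ℚ⟮z⟯ q * algebraMap ℚ ℚ⟮z⟯ s) * FU.gen_sq z hz
  obtain ⟨h1, h2⟩ := FU.coords_unique z hz hexp
  have huint : IsIntegral ℤ ((u : 𝓞 ℚ⟮z⟯) : ℚ⟮z⟯) :=
    NumberField.RingOfIntegers.isIntegral_coe _
  have hvint : IsIntegral ℤ (((u⁻¹ : (𝓞 ℚ⟮z⟯)ˣ) : 𝓞 ℚ⟮z⟯) : ℚ⟮z⟯) :=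
    NumberField.RingOfIntegers.isIntegral_coe _
  have key : ∃ P Q : ℤ, (P:ℚ) = p ∧ (Q:ℚ) = q ∧ P^2 - 318049*Q^2 = 1 := by
    by_cases hq : q = 0
    · subst hq
      rw [map_zero, zero_mul, add_zero] at hpq
      have hp0 : p * r = 1 := by linarith [h1]
      have hpne : p ≠ 0 := by
        intro h0
        rw [h0, zero_mul] at hp0
        norm_num at hp0
      have hs0 : s = 0 := by
        have hps : p * s = 0 := by linarith [h2]
        rcases mul_eq_zero.mp hps with h | h
        · exact absurd h hpne
        · exact h
      have hpint : IsIntegral ℤ p := by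
        rw [hpq] at huint
        exact (isIntegral_algebraMap_iff (algebraMap ℚ ℚ⟮z⟯).injective).mp huint
      have hrint : IsIntegral ℤ r := by
        rw [hrs, hs0, map_zero, zero_mul, add_zero] at hvint
        exact (isIntegral_algebraMap_iff (algebraMap ℚ ℚ⟮z⟯).injective).mp hvint
      obtain ⟨P, hP⟩ := IsIntegrallyClosed.isIntegral_iff.mp hpint
      obtain ⟨R, hR⟩ := IsIntegrallyClosed.isIntegral_iff.mp hrint
      have hP' : (P:ℚ) = p := (eq_intCast (algebraMap ℤ ℚ) P).symm.trans hP
      have hR' : (R:ℚ) = r := (eq_intCast (algebraMap ℤ ℚ) R).symm.trans hR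
      have hPR : P * R = 1 := by
        have : ((P*R : ℤ) : ℚ) = 1 := by push_cast; rw [hP', hR']; exact hp0
        exact_mod_cast this
      have hP2 : P^2 - 318049*(0:ℤ)^2 = 1 := by
        rcases Int.isUnit_iff.mp (IsUnit.of_mul_eq_one _ hPR) with h | h <;> rw [h] <;> norm_num
      exact ⟨P, 0, hP', by norm_num, hP2⟩
    · have hs : s ≠ 0 := by
        intro hs0
        subst hs0
        have hr0 : r = 0 := by
          rcases mul_eq_zero.mp (by linarith [h2] : q * r = 0) with h | h
          · exact absurd h hq
          · exact h
        rw [hr0] at h1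
        norm_num at h1
      obtain ⟨⟨s1, hs1⟩, ⟨N, hN⟩⟩ := FU.integral_coords z hz _ huint p q hq hpq
      obtain ⟨⟨s2, hs2⟩, ⟨M, hM⟩⟩ := FU.integral_coords z hz _ hvint r s hs hrs
      have hNM : (N:ℚ)*(M:ℚ) = 1 := by
        rw [hN, hM]
        linear_combination (p*r + 318049*(q*s) + 1) * h1 - 318049*(p*s + q*r) * h2
      have hNMz : N*M = 1 := by exact_mod_cast hNM
      have hNpm : N = 1 ∨ N = -1 := Int.isUnit_iff.mp (IsUnit.of_mul_eq_one _ hNMz)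
      have h4 : 318049 * (2*q)^2 = ((s1^2 - 4*N : ℤ) : ℚ) := by
        push_cast
        rw [hs1, hN]
        ring
      obtain ⟨t, ht⟩ := FU.den_lemma (2*q) (s1^2 - 4*N) h4
      have hst : s1^2 - 318049*t^2 = 4*N := by
        have hq2 : ((s1^2 - 318049*t^2 : ℤ) : ℚ) = ((4*N : ℤ) : ℚ) := by
          push_cast
          rw [hs1, ht, hN]
          ring
        exact_mod_cast hq2
      obtain ⟨hN1, ⟨P, hP⟩, ⟨Q, hQ⟩⟩ := FU.int_pell s1 t N hNpm hst
      refine ⟨P, Q, ?_, ?_, ?_⟩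
      · have hPp : ((2*P : ℤ):ℚ) = 2*p := by rw [← hP]; exact hs1
        push_cast at hPp
        linarith
      · have hQq : ((2*Q : ℤ):ℚ) = 2*q := by rw [← hQ]; exact ht
        push_cast at hQq
        linarith
      · rw [hN1, hP, hQ] at hst
        nlinarith [hst]
  obtain ⟨P, Q, hPp, hQq, hPell⟩ := key
  obtain ⟨n, hn⟩ := Pell.IsFundamental.eq_zpow_or_neg_zpow FU.a1_fund (Pell.Solution₁.mk (d := 318049) P Q hPell)
  refine ⟨n, ?_⟩
  have hcoeu : ((u : 𝓞 ℚ⟮z⟯) : ℚ⟮z⟯)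
      = ((FU.phi z hz (Pell.Solution₁.mk P Q hPell) : (ℚ⟮z⟯)ˣ) : ℚ⟮z⟯) := by
    rw [FU.phi_val, hpq, Pell.Solution₁.x_mk, Pell.Solution₁.y_mk, ← hPp, ← hQq,
      map_intCast, map_intCast]
  have hε : ((FU.phi z hz FU.a1 : (ℚ⟮z⟯)ˣ) : ℚ⟮z⟯)
      = 13535 + 24 * AdjoinSimple.gen ℚ z := by
    rw [FU.phi_val, FU.a1, Pell.Solution₁.x_mk, Pell.Solution₁.y_mk]
    norm_num
  rcases hn with hn | hn
  · left
    rw [hcoeu, hn, map_zpow, Units.val_zpow_eq_zpow_val, hε]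
  · right
    rw [hcoeu, hn, FU.phi_neg, Units.val_neg, map_zpow, Units.val_zpow_eq_zpow_val, hε]
end

section
/- Let K = Q(√318049), where 318049 = 47 · 67 · 101, and let ε = 13535 + 24√318049. Then no prime p ≥ 23 dividing the integer Norm(ε¹² − 1) splits in K; equivalently, for every prime p ≥ 23 dividing |Norm(ε¹² − 1)|, either p divides 318049 or 318049 is not a square modulo p. -/
open IntermediateField NumberField Polynomial

theorem norm_quad {K L : Type*} [Field K] [Field L] [Algebra K L]
    (pb : PowerBasis K L) (hd : pb.dim = 2) (c x y : K)
    (hc : pb.gen ^ 2 = algebraMap K L c) :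
    Algebra.norm K (algebraMap K L x + algebraMap K L y * pb.gen) = x ^ 2 - c * y ^ 2 := by
  set b : Module.Basis (Fin 2) K L := pb.basis.reindex (finCongr hd) with hb
  have hb0 : b 0 = 1 := by
    simp [hb, Module.Basis.reindex_apply, PowerBasis.basis_eq_pow]
  have hb1 : b 1 = pb.gen := by
    simp [hb, Module.Basis.reindex_apply, PowerBasis.basis_eq_pow]
  set ξ : L := algebraMap K L x + algebraMap K L y * pb.gen with hξ
  have e0 : ξ * b 0 = x • b 0 + y • b 1 := by
    rw [hb0, hb1, Algebra.smul_def, Algebra.smul_def]; ring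
  have e1 : ξ * b 1 = (c * y) • b 0 + x • b 1 := by
    rw [hb0, hb1, Algebra.smul_def, Algebra.smul_def, map_mul]
    have : algebraMap K L c = pb.gen ^ 2 := hc.symm
    rw [this]; ring
  have key : ∀ (u v : K) (i : Fin 2), b.repr (u • b 0 + v • b 1) i =
      (if i = 0 then u else v) := by
    intro u v i
    rw [map_add, map_smul, map_smul, Module.Basis.repr_self, Module.Basis.repr_self]
    fin_cases i <;> simp
  rw [Algebra.norm_eq_matrix_det b, Matrix.det_fin_two]
  rw [Algebra.leftMulMatrix_eq_repr_mul, Algebra.leftMulMatrix_eq_repr_mul,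
      Algebra.leftMulMatrix_eq_repr_mul, Algebra.leftMulMatrix_eq_repr_mul]
  rw [e0, e1, key, key, key, key]
  simp; ring


theorem nonsq1289 : ¬ IsSquare (318049 : ZMod 1289) := by
  have h1 : (318049 : ZMod 1289) ^ 1 = 955 := by rw [pow_one]; decide
  have h2 : (318049 : ZMod 1289) ^ 2 = 702 := by rw [(by norm_num : (2 : ℕ) = 1 * 2), pow_mul, h1]; decide
  have h3 : (318049 : ZMod 1289) ^ 5 = 1030 := by rw [(by norm_num : (5 : ℕ) = 2 * 2 + 1), pow_succ, pow_mul, h2]; decide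
  have h4 : (318049 : ZMod 1289) ^ 10 = 53 := by rw [(by norm_num : (10 : ℕ) = 5 * 2), pow_mul, h3]; decide
  have h5 : (318049 : ZMod 1289) ^ 20 = 231 := by rw [(by norm_num : (20 : ℕ) = 10 * 2), pow_mul, h4]; decide
  have h6 : (318049 : ZMod 1289) ^ 40 = 512 := by rw [(by norm_num : (40 : ℕ) = 20 * 2), pow_mul, h5]; decide
  have h7 : (318049 : ZMod 1289) ^ 80 = 477 := by rw [(by norm_num : (80 : ℕ) = 40 * 2), pow_mul, h6]; decide
  have h8 : (318049 : ZMod 1289) ^ 161 = 887 := by rw [(by norm_num : (161 : ℕ) = 80 * 2 + 1), pow_succ, pow_mul, h7]; decide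
  have h9 : (318049 : ZMod 1289) ^ 322 = 479 := by rw [(by norm_num : (322 : ℕ) = 161 * 2), pow_mul, h8]; decide
  have h10 : (318049 : ZMod 1289) ^ 644 = 1288 := by rw [(by norm_num : (644 : ℕ) = 322 * 2), pow_mul, h9]; decide
  have hne : (318049 : ZMod 1289) ≠ 0 := by decide
  have hne1 : (1288 : ZMod 1289) ≠ 1 := by decide
  haveI : Fact (Nat.Prime 1289) := Fact.mk (by norm_num)
  intro hsq
  have hcrit := (ZMod.euler_criterion 1289 hne).mp hsq
  rw [(by norm_num : (1289 / 2 : ℕ) = 644), h10] at hcrit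
  exact hne1 hcrit

theorem nonsq2707 : ¬ IsSquare (318049 : ZMod 2707) := by
  have h1 : (318049 : ZMod 2707) ^ 1 = 1330 := by rw [pow_one]; decide
  have h2 : (318049 : ZMod 2707) ^ 2 = 1229 := by rw [(by norm_num : (2 : ℕ) = 1 * 2), pow_mul, h1]; decide
  have h3 : (318049 : ZMod 2707) ^ 5 = 174 := by rw [(by norm_num : (5 : ℕ) = 2 * 2 + 1), pow_succ, pow_mul, h2]; decide
  have h4 : (318049 : ZMod 2707) ^ 10 = 499 := by rw [(by norm_num : (10 : ℕ) = 5 * 2), pow_mul, h3]; decide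
  have h5 : (318049 : ZMod 2707) ^ 21 = 2364 := by rw [(by norm_num : (21 : ℕ) = 10 * 2 + 1), pow_succ, pow_mul, h4]; decide
  have h6 : (318049 : ZMod 2707) ^ 42 = 1248 := by rw [(by norm_num : (42 : ℕ) = 21 * 2), pow_mul, h5]; decide
  have h7 : (318049 : ZMod 2707) ^ 84 = 979 := by rw [(by norm_num : (84 : ℕ) = 42 * 2), pow_mul, h6]; decide
  have h8 : (318049 : ZMod 2707) ^ 169 = 230 := by rw [(by norm_num : (169 : ℕ) = 84 * 2 + 1), pow_succ, pow_mul, h7]; decide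
  have h9 : (318049 : ZMod 2707) ^ 338 = 1467 := by rw [(by norm_num : (338 : ℕ) = 169 * 2), pow_mul, h8]; decide
  have h10 : (318049 : ZMod 2707) ^ 676 = 24 := by rw [(by norm_num : (676 : ℕ) = 338 * 2), pow_mul, h9]; decide
  have h11 : (318049 : ZMod 2707) ^ 1353 = 2706 := by rw [(by norm_num : (1353 : ℕ) = 676 * 2 + 1), pow_succ, pow_mul, h10]; decide
  have hne : (318049 : ZMod 2707) ≠ 0 := by decide
  have hne1 : (2706 : ZMod 2707) ≠ 1 := by decide
  haveI : Fact (Nat.Prime 2707) := Fact.mk (by norm_num)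
  intro hsq
  have hcrit := (ZMod.euler_criterion 2707 hne).mp hsq
  rw [(by norm_num : (2707 / 2 : ℕ) = 1353), h11] at hcrit
  exact hne1 hcrit

theorem nonsq955391 : ¬ IsSquare (318049 : ZMod 955391) := by
  have h1 : (318049 : ZMod 955391) ^ 1 = 318049 := by rw [pow_one]
  have h2 : (318049 : ZMod 955391) ^ 3 = 282267 := by rw [(by norm_num : (3 : ℕ) = 1 * 2 + 1), pow_succ, pow_mul, h1]; decide
  have h3 : (318049 : ZMod 955391) ^ 7 = 466160 := by rw [(by norm_num : (7 : ℕ) = 3 * 2 + 1), pow_succ, pow_mul, h2]; decide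
  have h4 : (318049 : ZMod 955391) ^ 14 = 507259 := by rw [(by norm_num : (14 : ℕ) = 7 * 2), pow_mul, h3]; decide
  have h5 : (318049 : ZMod 955391) ^ 29 = 89958 := by rw [(by norm_num : (29 : ℕ) = 14 * 2 + 1), pow_succ, pow_mul, h4]; decide
  have h6 : (318049 : ZMod 955391) ^ 58 = 279994 := by rw [(by norm_num : (58 : ℕ) = 29 * 2), pow_mul, h5]; decide
  have h7 : (318049 : ZMod 955391) ^ 116 = 120749 := by rw [(by norm_num : (116 : ℕ) = 58 * 2), pow_mul, h6]; decide
  have h8 : (318049 : ZMod 955391) ^ 233 = 369010 := by rw [(by norm_num : (233 : ℕ) = 116 * 2 + 1), pow_succ, pow_mul, h7]; decide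
  have h9 : (318049 : ZMod 955391) ^ 466 = 322434 := by rw [(by norm_num : (466 : ℕ) = 233 * 2), pow_mul, h8]; decide
  have h10 : (318049 : ZMod 955391) ^ 932 = 901909 := by rw [(by norm_num : (932 : ℕ) = 466 * 2), pow_mul, h9]; decide
  have h11 : (318049 : ZMod 955391) ^ 1865 = 787087 := by rw [(by norm_num : (1865 : ℕ) = 932 * 2 + 1), pow_succ, pow_mul, h10]; decide
  have h12 : (318049 : ZMod 955391) ^ 3731 = 19555 := by rw [(by norm_num : (3731 : ℕ) = 1865 * 2 + 1), pow_succ, pow_mul, h11]; decide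
  have h13 : (318049 : ZMod 955391) ^ 7463 = 759149 := by rw [(by norm_num : (7463 : ℕ) = 3731 * 2 + 1), pow_succ, pow_mul, h12]; decide
  have h14 : (318049 : ZMod 955391) ^ 14927 = 347876 := by rw [(by norm_num : (14927 : ℕ) = 7463 * 2 + 1), pow_succ, pow_mul, h13]; decide
  have h15 : (318049 : ZMod 955391) ^ 29855 = 14822 := by rw [(by norm_num : (29855 : ℕ) = 14927 * 2 + 1), pow_succ, pow_mul, h14]; decide
  have h16 : (318049 : ZMod 955391) ^ 59711 = 898188 := by rw [(by norm_num : (59711 : ℕ) = 29855 * 2 + 1), pow_succ, pow_mul, h15]; decide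
  have h17 : (318049 : ZMod 955391) ^ 119423 = 420485 := by rw [(by norm_num : (119423 : ℕ) = 59711 * 2 + 1), pow_succ, pow_mul, h16]; decide
  have h18 : (318049 : ZMod 955391) ^ 238847 = 955343 := by rw [(by norm_num : (238847 : ℕ) = 119423 * 2 + 1), pow_succ, pow_mul, h17]; decide
  have h19 : (318049 : ZMod 955391) ^ 477695 = 955390 := by rw [(by norm_num : (477695 : ℕ) = 238847 * 2 + 1), pow_succ, pow_mul, h18]; decide
  have hne : (318049 : ZMod 955391) ≠ 0 := by decide
  have hne1 : (955390 : ZMod 955391) ≠ 1 := by decide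
  haveI : Fact (Nat.Prime 955391) := Fact.mk (by norm_num)
  intro hsq
  have hcrit := (ZMod.euler_criterion 955391 hne).mp hsq
  rw [(by norm_num : (955391 / 2 : ℕ) = 477695), h19] at hcrit
  exact hne1 hcrit



/-- Let `K = ℚ(√318049)`, where `318049 = 47 · 67 · 101`, and let `ε = 13535 + 24√318049`.
Then no prime `p ≥ 23` dividing the integer `Norm(ε¹² - 1)` splits in `K`; equivalently,
for every prime `p ≥ 23` dividing `|Norm(ε¹² - 1)|`, either `p` divides `318049` or `318049`
is not a square modulo `p`. -/
theorem no_split_prime_divides_norm (z : ℝ) (hz : z ^ 2 = 318049) :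
    ∃ N : ℤ, (N : ℚ) = Algebra.norm ℚ ((13535 + 24 * AdjoinSimple.gen ℚ z) ^ 12 - 1) ∧
      ∀ p : ℕ, p.Prime → 23 ≤ p → (p : ℤ) ∣ N →
        (p ∣ 318049 ∨ ¬ IsSquare (318049 : ZMod p)) := by
  have hirrat : Irrational z := by
    apply irrational_nrt_of_notint_nrt 2 318049 (by rw [hz]; norm_num) _ two_pos
    rintro ⟨y, rfl⟩
    have hy : y ^ 2 = 318049 := by exact_mod_cast hz
    have h1 : y ≤ 563 ∨ 564 ≤ y := by omega
    have h2 : -563 ≤ y ∨ y ≤ -564 := by omega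
    rcases h1 with h1 | h1 <;> rcases h2 with h2 | h2 <;> nlinarith
  have hrat : ∀ b : ℚ, b ^ 2 ≠ (318049 : ℚ) := by
    intro b hb
    have h : ((b : ℝ)) ^ 2 = z ^ 2 := by rw [hz]; exact_mod_cast hb
    rcases sq_eq_sq_iff_eq_or_eq_neg.mp h with h | h
    · exact hirrat ⟨b, h⟩
    · exact hirrat ⟨-b, by push_cast; linarith⟩
  have hint : IsIntegral ℚ z :=
    ⟨X ^ 2 - C (318049 : ℚ), monic_X_pow_sub_C _ (by norm_num), by simp [hz]⟩
  have hmin : minpoly ℚ z = X ^ 2 - C (318049 : ℚ) := by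
    refine (minpoly.eq_of_irreducible_of_monic ?_ (by simp [hz])
      (monic_X_pow_sub_C _ (by norm_num))).symm
    exact X_pow_sub_C_irreducible_of_prime Nat.prime_two hrat
  have hdim : (IntermediateField.adjoin.powerBasis hint).dim = 2 := by
    rw [IntermediateField.adjoin.powerBasis_dim, hmin]
    compute_degree!
  set α := AdjoinSimple.gen ℚ z with hαdef
  have hα : α ^ 2 = algebraMap ℚ ℚ⟮z⟯ 318049 := by
    apply (algebraMap ℚ⟮z⟯ ℝ).injective
    rw [map_pow, hαdef, AdjoinSimple.algebraMap_gen, hz, ← IsScalarTower.algebraMap_apply]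
    norm_num
  have hα' : α ^ 2 = (318049 : ℚ⟮z⟯) := by rw [hα, map_ofNat]
  have hx : (13535 + 24 * α) ^ 12 - 1 =
      algebraMap ℚ ℚ⟮z⟯ (77415703813868677770790148035242721290436528336396800 : ℚ) +
      algebraMap ℚ ℚ⟮z⟯ (137272027824444064242863720846390477919571539421920 : ℚ) * α := by
    rw [map_ofNat, map_ofNat]
    linear_combination (36520347436056576 * α ^ 10 + 247151451273512878080 * α ^ 9 +
      778222422957877125709824 * α ^ 8 + 1519721265104240594827345920 * α ^ 7 +
      2076152685211793152974967013376 * α ^ 6 + 2133388494527251326541364283310080 * α ^ 5 +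
      1745966149121986494057613751221223424 * α ^ 4 +
      1203316500001695228375143906754967633920 * α ^ 3 +
      740279155244467660911096620813510888779776 * α ^ 2 +
      429077593469666279087464649350678281000622080 * α +
      243289251582686294833133857459541989606768977024) * hα'
  have hnq := norm_quad (IntermediateField.adjoin.powerBasis hint) hdim (318049 : ℚ)
      (77415703813868677770790148035242721290436528336396800 : ℚ)
      (137272027824444064242863720846390477919571539421920 : ℚ) hα
  have hnorm : Algebra.norm ℚ ((13535 + 24 * α) ^ 12 - 1) =
      ((-154831407627737355541580296070485442580873056672793600 : ℤ) : ℚ) := by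
    rw [hx]
    exact hnq.trans (by norm_num)
  refine ⟨-154831407627737355541580296070485442580873056672793600, hnorm.symm, ?_⟩
  intro p hp hp23 hdvd
  have hdvd' : p ∣ (154831407627737355541580296070485442580873056672793600 : ℕ) := by
    have h1 : ((p : ℤ)) ∣ (154831407627737355541580296070485442580873056672793600 : ℤ) :=
      dvd_neg.mp hdvd
    exact_mod_cast h1
  have hfac : (154831407627737355541580296070485442580873056672793600 : ℕ) = 2 ^ 10 * (3 ^ 4 * (5 ^ 2 * (7 ^ 2 * (11 ^ 2 * (13 ^ 2 * (23 ^ 2 * (47 * (59 ^ 2 * (67 * (101 * (107 ^ 2 * (1289 ^ 2 * (2707 ^ 2 * 955391 ^ 2))))))))))))) := by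
    norm_num
  rw [hfac] at hdvd'
  rcases (Nat.Prime.dvd_mul hp).mp hdvd' with h | hdvd'
  · have hpq : p = 2 := (Nat.prime_dvd_prime_iff_eq hp (by norm_num)).mp (hp.dvd_of_dvd_pow h)
    omega
  rcases (Nat.Prime.dvd_mul hp).mp hdvd' with h | hdvd'
  · have hpq : p = 3 := (Nat.prime_dvd_prime_iff_eq hp (by norm_num)).mp (hp.dvd_of_dvd_pow h)
    omega
  rcases (Nat.Prime.dvd_mul hp).mp hdvd' with h | hdvd'
  · have hpq : p = 5 := (Nat.prime_dvd_prime_iff_eq hp (by norm_num)).mp (hp.dvd_of_dvd_pow h)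
    omega
  rcases (Nat.Prime.dvd_mul hp).mp hdvd' with h | hdvd'
  · have hpq : p = 7 := (Nat.prime_dvd_prime_iff_eq hp (by norm_num)).mp (hp.dvd_of_dvd_pow h)
    omega
  rcases (Nat.Prime.dvd_mul hp).mp hdvd' with h | hdvd'
  · have hpq : p = 11 := (Nat.prime_dvd_prime_iff_eq hp (by norm_num)).mp (hp.dvd_of_dvd_pow h)
    omega
  rcases (Nat.Prime.dvd_mul hp).mp hdvd' with h | hdvd'
  · have hpq : p = 13 := (Nat.prime_dvd_prime_iff_eq hp (by norm_num)).mp (hp.dvd_of_dvd_pow h)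
    omega
  rcases (Nat.Prime.dvd_mul hp).mp hdvd' with h | hdvd'
  · have hpq : p = 23 := (Nat.prime_dvd_prime_iff_eq hp (by norm_num)).mp (hp.dvd_of_dvd_pow h)
    exact Or.inr (by rw [hpq]; decide)
  rcases (Nat.Prime.dvd_mul hp).mp hdvd' with h | hdvd'
  · have hpq : p = 47 := (Nat.prime_dvd_prime_iff_eq hp (by norm_num)).mp h
    exact Or.inl (by rw [hpq]; norm_num)
  rcases (Nat.Prime.dvd_mul hp).mp hdvd' with h | hdvd'
  · have hpq : p = 59 := (Nat.prime_dvd_prime_iff_eq hp (by norm_num)).mp (hp.dvd_of_dvd_pow h)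
    exact Or.inr (by rw [hpq]; decide)
  rcases (Nat.Prime.dvd_mul hp).mp hdvd' with h | hdvd'
  · have hpq : p = 67 := (Nat.prime_dvd_prime_iff_eq hp (by norm_num)).mp h
    exact Or.inl (by rw [hpq]; norm_num)
  rcases (Nat.Prime.dvd_mul hp).mp hdvd' with h | hdvd'
  · have hpq : p = 101 := (Nat.prime_dvd_prime_iff_eq hp (by norm_num)).mp h
    exact Or.inl (by rw [hpq]; norm_num)
  rcases (Nat.Prime.dvd_mul hp).mp hdvd' with h | hdvd'
  · have hpq : p = 107 := (Nat.prime_dvd_prime_iff_eq hp (by norm_num)).mp (hp.dvd_of_dvd_pow h)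
    exact Or.inr (by rw [hpq]; decide)
  rcases (Nat.Prime.dvd_mul hp).mp hdvd' with h | hdvd'
  · have hpq : p = 1289 := (Nat.prime_dvd_prime_iff_eq hp (by norm_num)).mp (hp.dvd_of_dvd_pow h)
    exact Or.inr (by rw [hpq]; exact nonsq1289)
  rcases (Nat.Prime.dvd_mul hp).mp hdvd' with h | hdvd'
  · have hpq : p = 2707 := (Nat.prime_dvd_prime_iff_eq hp (by norm_num)).mp (hp.dvd_of_dvd_pow h)
    exact Or.inr (by rw [hpq]; exact nonsq2707)
  have hpq : p = 955391 := (Nat.prime_dvd_prime_iff_eq hp (by norm_num)).mp (hp.dvd_of_dvd_pow hdvd')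
  exact Or.inr (by rw [hpq]; exact nonsq955391)
end
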